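/- arXiv:2301.13642 — 12 statements merged into one kernel-verified Lean document; each statement's English description precedes it below -/
import Mathlib

section
/- Let S be a finite nonempty set, let p ∈ (1,∞) be real with Hölder conjugate q = p/(p−1), let v ∈ ℝ^S and ε > 0. Then the minimum of ⟨c, v⟩ = ∑_{s∈S} c(s)v(s) over all c ∈ ℝ^S satisfying ‖c‖_p ≤ ε and ∑_{s∈S} c(s) = 0 equals −ε·κ_q(v). -/
open Real Filter

private lemma sign_mul_abs_rpow {q : ℝ} (hq : 1 < q) (x : ℝ) :
    Real.sign x * |x| ^ (q - 1) * x = |x| ^ q := by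
  rcases lt_trichotomy x 0 with hx | hx | hx
  · rw [Real.sign_of_neg hx, abs_of_neg hx]
    have : (-x) ^ (q - 1) * (-x) ^ (1 : ℝ) = (-x) ^ (q - 1 + 1) :=
      (Real.rpow_add (by linarith) _ _).symm
    rw [Real.rpow_one, show q - 1 + 1 = q by ring] at this
    linear_combination this
  · simp [hx, Real.zero_rpow (by linarith : q ≠ 0), Real.zero_rpow (by linarith : q - 1 ≠ 0)]
  · rw [Real.sign_of_pos hx, abs_of_pos hx]
    have : x ^ (q - 1) * x ^ (1 : ℝ) = x ^ (q - 1 + 1) := (Real.rpow_add hx _ _).symm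
    rw [Real.rpow_one] at this
    rw [one_mul, this]
    ring_nf

private lemma abs_sign_mul_abs_rpow {q : ℝ} (hq : 1 < q) (x : ℝ) :
    |Real.sign x * |x| ^ (q - 1)| = |x| ^ (q - 1) := by
  rcases lt_trichotomy x 0 with hx | hx | hx
  · rw [Real.sign_of_neg hx]
    rw [abs_of_nonpos (by nlinarith [Real.rpow_nonneg (abs_nonneg x) (q-1)])]
    ring
  · simp [hx, Real.zero_rpow (by linarith : q - 1 ≠ 0)]
  · rw [Real.sign_of_pos hx, one_mul, abs_of_nonneg (Real.rpow_nonneg (abs_nonneg x) _)]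

private lemma myHasDerivAt_abs_rpow {q : ℝ} (hq : 1 < q) (x : ℝ) :
    HasDerivAt (fun y : ℝ => |y| ^ q) (q * Real.sign x * |x| ^ (q - 1)) x := by
  rcases lt_trichotomy x 0 with hx | hx | hx
  · have h1 : HasDerivAt (fun y : ℝ => (-y) ^ q) (q * (-x) ^ (q - 1) * (-1)) x :=
      (Real.hasDerivAt_rpow_const (p := q) (Or.inl (by intro h; nlinarith))).comp x
        (hasDerivAt_neg x)
    have h2 : (fun y : ℝ => |y| ^ q) =ᶠ[nhds x] fun y : ℝ => (-y) ^ q := by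
      filter_upwards [eventually_lt_nhds hx] with y hy
      rw [abs_of_neg hy]
    have := h1.congr_of_eventuallyEq h2
    refine this.congr_deriv ?_
    rw [Real.sign_of_neg hx, abs_of_neg hx]; ring
  · subst hx
    rw [Real.sign_zero, mul_zero, zero_mul]
    rw [hasDerivAt_iff_isLittleO]
    simp only [abs_zero, Real.zero_rpow (by linarith : q ≠ 0), sub_zero, smul_zero]
    rw [Asymptotics.isLittleO_iff]
    intro c hc
    have hcont : Filter.Tendsto (fun y : ℝ => |y| ^ (q - 1)) (nhds 0) (nhds 0) := by
      have : Continuous fun y : ℝ => |y| ^ (q - 1) :=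
        continuous_abs.rpow_const (fun _ => Or.inr (by linarith))
      have h0 : |(0:ℝ)| ^ (q-1) = 0 := by
        rw [abs_zero, Real.zero_rpow (by linarith : q - 1 ≠ 0)]
      have := this.tendsto 0
      rwa [h0] at this
    filter_upwards [hcont.eventually (eventually_lt_nhds hc)] with y hy
    have hy' : |y| ^ q = |y| ^ (q - 1) * |y| := by
      rcases eq_or_ne y 0 with rfl | hy0
      · simp [Real.zero_rpow (by linarith : q ≠ 0), Real.zero_rpow (by linarith : q - 1 ≠ 0)]
      · have : |y| ^ (q - 1) * |y| ^ (1 : ℝ) = |y| ^ (q - 1 + 1) :=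
          (Real.rpow_add (abs_pos.mpr hy0) _ _).symm
        rw [Real.rpow_one] at this
        rw [this]; ring_nf
    rw [Real.norm_eq_abs, Real.norm_eq_abs]
    rw [abs_of_nonneg (Real.rpow_nonneg (abs_nonneg y) q), hy']
    exact mul_le_mul_of_nonneg_right hy.le (abs_nonneg y)
  · have h1 : HasDerivAt (fun y : ℝ => y ^ q) (q * x ^ (q - 1)) x :=
      Real.hasDerivAt_rpow_const (p := q) (Or.inl hx.ne')
    have h2 : (fun y : ℝ => |y| ^ q) =ᶠ[nhds x] fun y : ℝ => y ^ q := by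
      filter_upwards [eventually_gt_nhds hx] with y hy
      rw [abs_of_pos hy]
    have := h1.congr_of_eventuallyEq h2
    refine this.congr_deriv ?_
    rw [Real.sign_of_pos hx, abs_of_pos hx]; ring

/-- For a finite nonempty set `S`, `p ∈ (1,∞)` with Hölder conjugate
`q = p/(p-1)`, `v : S → ℝ` and `ε > 0`, the minimum of `⟨c, v⟩` over all `c` with
`‖c‖_p ≤ ε` and `∑ s, c s = 0` equals `-ε * κ_q(v)`, where
`κ_q(v) = ⨅ ω, ‖v - ω·𝟙‖_q`. -/
theorem stmt0 (S : Type*) [Fintype S] [Nonempty S]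
    (p q : ℝ) (hp : 1 < p) (hq : q = p / (p - 1))
    (v : S → ℝ) (ε : ℝ) (hε : 0 < ε) :
    IsLeast {x : ℝ | ∃ c : S → ℝ,
        (∑ s, |c s| ^ p) ^ (1 / p) ≤ ε ∧ (∑ s, c s) = 0 ∧
        x = ∑ s, c s * v s}
      (-ε * ⨅ ω : ℝ, (∑ s, |v s - ω| ^ q) ^ (1 / q)) := by
  have hp0 : (0:ℝ) < p := by linarith
  have hq1 : 1 < q := by rw [hq, lt_div_iff₀ (by linarith)]; linarith
  have hq0 : (0:ℝ) < q := by linarith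
  have hpq : p.HolderConjugate q := hq ▸ Real.HolderConjugate.conjExponent hp
  have hp1 : p - 1 ≠ 0 := sub_ne_zero_of_ne (ne_of_gt hp)
  have hqp : (q - 1) * p = q := by
    have h : q * (p - 1) = p := by rw [hq]; exact div_mul_cancel₀ p hp1
    linear_combination h
  set f : ℝ → ℝ := fun ω => (∑ s, |v s - ω| ^ q) ^ (1 / q) with hfdef
  have hsum_nonneg : ∀ ω : ℝ, 0 ≤ ∑ s, |v s - ω| ^ q := fun ω =>
    Finset.sum_nonneg fun s _ => Real.rpow_nonneg (abs_nonneg _) _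
  have hfval : ∀ ω, f ω = (∑ s, |v s - ω| ^ q) ^ (1 / q) := fun ω => by rw [hfdef]
  have hf_nonneg : ∀ ω, 0 ≤ f ω := fun ω => by
    rw [hfval]; exact Real.rpow_nonneg (hsum_nonneg ω) _
  have hfc : Continuous f := by
    rw [hfdef]
    apply Continuous.rpow_const
    · exact continuous_finset_sum _ fun s _ =>
        ((continuous_const.sub continuous_id).abs).rpow_const fun x => Or.inr hq0.le
    · exact fun x => Or.inr (by positivity)
  have hs : (Finset.univ : Finset S).Nonempty := Finset.univ_nonempty
  set m := Finset.univ.inf' hs v with hm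
  set M := Finset.univ.sup' hs v with hM
  have hmM : m ≤ M := le_trans (Finset.inf'_le v (Finset.mem_univ hs.choose))
    (Finset.le_sup' v (Finset.mem_univ hs.choose))
  obtain ⟨ω', hω'mem, hω'min⟩ := (isCompact_Icc (a := m) (b := M)).exists_isMinOn
    (Set.nonempty_Icc.mpr hmM) hfc.continuousOn
  have hmono : ∀ a b : ℝ, (∀ s, |v s - a| ≤ |v s - b|) → f a ≤ f b := fun a b h => by
    rw [hfval, hfval]
    exact Real.rpow_le_rpow (hsum_nonneg a)
      (Finset.sum_le_sum fun s _ => Real.rpow_le_rpow (abs_nonneg _) (h s) hq0.le)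
      (by positivity)
  have hglob : ∀ ω, f ω' ≤ f ω := by
    intro ω
    rcases le_or_gt ω m with h | h
    · refine le_trans (hω'min (Set.left_mem_Icc.mpr hmM)) (hmono m ω fun s => ?_)
      have h1 : m ≤ v s := Finset.inf'_le v (Finset.mem_univ s)
      rw [abs_of_nonneg (by linarith), abs_of_nonneg (by linarith)]; linarith
    · rcases le_or_gt ω M with h2 | h2
      · exact hω'min (Set.mem_Icc.mpr ⟨h.le, h2⟩)
      · refine le_trans (hω'min (Set.right_mem_Icc.mpr hmM)) (hmono M ω fun s => ?_)
        have h1 : v s ≤ M := Finset.le_sup' v (Finset.mem_univ s)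
        rw [abs_of_nonpos (by linarith), abs_of_nonpos (by linarith)]; linarith
  have hK : (⨅ ω : ℝ, f ω) = f ω' :=
    le_antisymm (ciInf_le ⟨0, by rintro x ⟨ω, rfl⟩; exact hf_nonneg ω⟩ ω') (le_ciInf hglob)
  constructor
  · -- membership
    rw [hK]
    rcases eq_or_lt_of_le (hsum_nonneg ω') with hS0 | hSpos
    · have hf0 : f ω' = 0 := by
        rw [hfval, ← hS0, Real.zero_rpow (by positivity : (1:ℝ)/q ≠ 0)]
      exact ⟨fun _ => 0,
        by simp [Real.zero_rpow hp0.ne', Real.zero_rpow (show (1:ℝ)/p ≠ 0 by positivity),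
          Real.zero_rpow (show p⁻¹ ≠ 0 by positivity), hε.le],
        by simp, by simp [hf0]⟩
    · have hKpos : 0 < f ω' := by rw [hfval]; exact Real.rpow_pos_of_pos hSpos _
      have hKq : f ω' ^ q = ∑ s, |v s - ω'| ^ q := by
        rw [hfval, ← Real.rpow_mul (hsum_nonneg ω'), one_div_mul_cancel hq0.ne', Real.rpow_one]
      -- stationarity at the minimizer
      have hg : HasDerivAt (fun ω : ℝ => ∑ s, |v s - ω| ^ q)
          (∑ s, q * Real.sign (v s - ω') * |v s - ω'| ^ (q - 1) * (-1)) ω' := by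
        apply HasDerivAt.fun_sum
        intro s _
        have h1 : HasDerivAt (fun ω : ℝ => v s - ω) (-1) ω' := by
          simpa using (hasDerivAt_id ω').const_sub (v s)
        exact (myHasDerivAt_abs_rpow hq1 (v s - ω')).comp ω' h1
      have hloc : IsLocalMin (fun ω : ℝ => ∑ s, |v s - ω| ^ q) ω' := by
        apply Filter.Eventually.of_forall
        intro ω
        have := hglob ω
        rw [hfval, hfval] at this
        exact (Real.rpow_le_rpow_iff (hsum_nonneg ω') (hsum_nonneg ω) (by positivity)).mp this
      have hD0 : ∑ s, Real.sign (v s - ω') * |v s - ω'| ^ (q - 1) = 0 := by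
        have hD := hloc.hasDerivAt_eq_zero hg
        have h2 : ∑ s, q * Real.sign (v s - ω') * |v s - ω'| ^ (q - 1) * (-1)
            = -q * ∑ s, Real.sign (v s - ω') * |v s - ω'| ^ (q - 1) := by
          rw [Finset.mul_sum]; exact Finset.sum_congr rfl fun s _ => by ring
        rw [h2] at hD
        rcases mul_eq_zero.mp hD with h | h
        · exact absurd h (neg_ne_zero.mpr hq0.ne')
        · exact h
      have hczero : ∑ s, (-ε / f ω' ^ (q - 1)) *
          (Real.sign (v s - ω') * |v s - ω'| ^ (q - 1)) = 0 := by
        rw [← Finset.mul_sum, hD0, mul_zero]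
      refine ⟨fun s => (-ε / f ω' ^ (q - 1)) *
          (Real.sign (v s - ω') * |v s - ω'| ^ (q - 1)), ?_, hczero, ?_⟩
      · -- p-norm equals ε
        have habs : ∀ s : S,
            |(-ε / f ω' ^ (q - 1)) * (Real.sign (v s - ω') * |v s - ω'| ^ (q - 1))| ^ p
              = (ε / f ω' ^ (q - 1)) ^ p * |v s - ω'| ^ q := by
          intro s
          rw [abs_mul, abs_div, abs_neg, abs_of_pos hε,
            abs_of_pos (Real.rpow_pos_of_pos hKpos _), abs_sign_mul_abs_rpow hq1,
            Real.mul_rpow (by positivity) (Real.rpow_nonneg (abs_nonneg _) _),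
            ← Real.rpow_mul (abs_nonneg _), hqp]
        have hsum : ∑ s, |(-ε / f ω' ^ (q - 1)) *
            (Real.sign (v s - ω') * |v s - ω'| ^ (q - 1))| ^ p = ε ^ p := by
          rw [Finset.sum_congr rfl fun s _ => habs s, ← Finset.mul_sum, ← hKq,
            Real.div_rpow hε.le (Real.rpow_nonneg (hKpos.le) _),
            ← Real.rpow_mul hKpos.le, hqp]
          field_simp
        rw [hsum, one_div, Real.rpow_rpow_inv hε.le hp0.ne']
      · -- value equals -ε * f ω'
        have hterm : ∀ s : S, ((-ε / f ω' ^ (q - 1)) *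
            (Real.sign (v s - ω') * |v s - ω'| ^ (q - 1))) * v s
              = (-ε / f ω' ^ (q - 1)) * |v s - ω'| ^ q
                + ((-ε / f ω' ^ (q - 1)) *
                  (Real.sign (v s - ω') * |v s - ω'| ^ (q - 1))) * ω' := by
          intro s
          have h := sign_mul_abs_rpow hq1 (v s - ω')
          linear_combination (-ε / f ω' ^ (q - 1)) * h
        have hsum : ∑ s, ((-ε / f ω' ^ (q - 1)) *
            (Real.sign (v s - ω') * |v s - ω'| ^ (q - 1))) * v s
              = (-ε / f ω' ^ (q - 1)) * ∑ s, |v s - ω'| ^ q := by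
          rw [Finset.sum_congr rfl fun s _ => hterm s, Finset.sum_add_distrib,
            ← Finset.mul_sum, ← Finset.sum_mul, hczero, zero_mul, add_zero]
        rw [hsum, ← hKq]
        have hsplit : f ω' ^ q = f ω' ^ (q - 1) * f ω' := by
          have h := Real.rpow_add hKpos (q - 1) 1
          rw [Real.rpow_one, show q - 1 + 1 = q by ring] at h
          exact h
        rw [hsplit]
        have hne : f ω' ^ (q - 1) ≠ 0 := (Real.rpow_pos_of_pos hKpos _).ne'
        field_simp
  · -- lower bound
    rintro x ⟨c, hcp, hc0, rfl⟩
    rw [hK]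
    have h2 := Real.inner_le_Lp_mul_Lq (s := Finset.univ) (fun s => -c s)
      (fun s => v s - ω') hpq
    simp only [abs_neg] at h2
    have h3 : ∑ s, -c s * (v s - ω') = -(∑ s, c s * v s) := by
      have he : ∀ s : S, -c s * (v s - ω') = -(c s * v s) + c s * ω' := fun s => by ring
      rw [Finset.sum_congr rfl fun s _ => he s, Finset.sum_add_distrib,
        ← Finset.sum_mul, hc0, zero_mul, add_zero, Finset.sum_neg_distrib]
    rw [h3] at h2
    have h4 : (∑ s, |c s| ^ p) ^ (1 / p) * ((∑ s, |v s - ω'| ^ q) ^ (1 / q))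
        ≤ ε * ((∑ s, |v s - ω'| ^ q) ^ (1 / q)) :=
      mul_le_mul_of_nonneg_right hcp (Real.rpow_nonneg (hsum_nonneg ω') _)
    have h5 := hfval ω'
    linarith [h2, h4]
end

section
/- In the sa-rectangular setting, for every v ∈ ℝ^S, every state s ∈ S, and every policy π (i.e., π(·|s) ∈ Δ_A for each s): min over all reward noises r = (r_{s,a}) with |r_{s,a}| ≤ α_{s,a} and all kernel noises u = (u_{s,a}) with u_{s,a} : S → ℝ, ∑_{s'} u_{s,a}(s') = 0, ‖u_{s,a}‖_p ≤ β_{s,a}, of ∑_{a} π(a|s)[R₀(s,a) + r_{s,a} + γ ∑_{s'} (P₀(s'|s,a) + u_{s,a}(s')) v(s')], equals ∑_{a} π(a|s)[ −α_{s,a} − γ β_{s,a} κ_q(v) + R₀(s,a) + γ ∑_{s'} P₀(s'|s,a) v(s')]. Consequently, the maximum over π(·|s) ∈ Δ_A of this quantity equals max_{a∈A} [ −α_{s,a} − γ β_{s,a} κ_q(v) + R₀(s,a) + γ ∑_{s'} P₀(s'|s,a) v(s')]. -/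
open Finset Real

noncomputable def phiAux (q x : ℝ) : ℝ := (max x 0) ^ (q - 1) - (max (-x) 0) ^ (q - 1)

lemma phiAux_cont {q : ℝ} (hq : 1 < q) : Continuous (phiAux q) := by
  have h : Continuous fun y : ℝ => y ^ (q - 1) :=
    Real.continuous_rpow_const (by linarith)
  exact (h.comp (continuous_id.max continuous_const)).sub
    (h.comp (continuous_neg.max continuous_const))

lemma phiAux_abs {q : ℝ} (hq : 1 < q) (x : ℝ) : |phiAux q x| = |x| ^ (q - 1) := by
  have hq0 : q - 1 ≠ 0 := by linarith
  rcases lt_trichotomy x 0 with hx | rfl | hx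
  · rw [phiAux, max_eq_right hx.le, max_eq_left (by linarith), Real.zero_rpow hq0,
      zero_sub, abs_neg, abs_of_nonneg (Real.rpow_nonneg (by linarith) _), abs_of_neg hx]
  · simp [phiAux, Real.zero_rpow hq0]
  · rw [phiAux, max_eq_left hx.le, max_eq_right (by linarith), Real.zero_rpow hq0,
      sub_zero, abs_of_nonneg (Real.rpow_nonneg hx.le _), abs_of_pos hx]

lemma phiAux_mul {q : ℝ} (hq : 1 < q) (x : ℝ) : phiAux q x * x = |x| ^ q := by
  have hq0 : q - 1 ≠ 0 := by linarith
  have hqne : q ≠ 0 := by linarith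
  rcases lt_trichotomy x 0 with hx | rfl | hx
  · rw [phiAux, max_eq_right hx.le, max_eq_left (by linarith), Real.zero_rpow hq0, zero_sub,
      abs_of_neg hx]
    have h1 : (-x) ^ (q - 1) * (-x) ^ (1 : ℝ) = (-x) ^ q := by
      rw [← Real.rpow_add (by linarith)]; norm_num
    rw [Real.rpow_one] at h1
    nlinarith [h1]
  · simp [phiAux, Real.zero_rpow hqne]
  · rw [phiAux, max_eq_left hx.le, max_eq_right (by linarith), Real.zero_rpow hq0, sub_zero,
      abs_of_pos hx]
    have h1 : x ^ (q - 1) * x ^ (1 : ℝ) = x ^ q := by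
      rw [← Real.rpow_add hx]; norm_num
    rwa [Real.rpow_one] at h1

lemma phiAux_nonneg {q : ℝ} (hq : 1 < q) {x : ℝ} (hx : 0 ≤ x) : 0 ≤ phiAux q x := by
  have hq0 : q - 1 ≠ 0 := by linarith
  rw [phiAux, max_eq_left hx, max_eq_right (by linarith), Real.zero_rpow hq0, sub_zero]
  exact Real.rpow_nonneg hx _

lemma phiAux_nonpos {q : ℝ} (hq : 1 < q) {x : ℝ} (hx : x ≤ 0) : phiAux q x ≤ 0 := by
  have hq0 : q - 1 ≠ 0 := by linarith
  rw [phiAux, max_eq_right hx, max_eq_left (by linarith), Real.zero_rpow hq0, zero_sub,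
    neg_nonpos]
  exact Real.rpow_nonneg (by linarith) _

/-- sa-rectangular `L_p` robust Bellman operator equals the
reward-value regularized non-robust Bellman operator, and the optimal robust
Bellman operator is the max over actions of the regularized Q-values.
`κ_q(v) = ⨅ ω, ‖v - ω·𝟙‖_q`. -/
theorem stmt4 (S A : Type*) [Fintype S] [Fintype A] [Nonempty S] [Nonempty A]
    (P₀ : S → A → S → ℝ) (hP₀pos : ∀ s a s', 0 ≤ P₀ s a s')
    (hP₀sum : ∀ s a, ∑ s', P₀ s a s' = 1)
    (R₀ : S → A → ℝ) (γ : ℝ) (hγ0 : 0 ≤ γ) (hγ1 : γ < 1)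
    (p q : ℝ) (hp : 1 < p) (hq : q = p / (p - 1))
    (α β : S → A → ℝ) (hα : ∀ s a, 0 ≤ α s a) (hβ : ∀ s a, 0 ≤ β s a)
    (v : S → ℝ) (s : S)
    (pol : S → A → ℝ) (hpolpos : ∀ s a, 0 ≤ pol s a)
    (hpolsum : ∀ s, ∑ a, pol s a = 1) :
    IsLeast {x : ℝ | ∃ (r : S → A → ℝ) (u : S → A → S → ℝ),
        (∀ s a, |r s a| ≤ α s a) ∧
        (∀ s a, ∑ s', u s a s' = 0) ∧
        (∀ s a, (∑ s', |u s a s'| ^ p) ^ (1 / p) ≤ β s a) ∧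
        x = ∑ a, pol s a * (R₀ s a + r s a +
              γ * ∑ s', (P₀ s a s' + u s a s') * v s')}
      (∑ a, pol s a * (-(α s a)
          - γ * β s a * (⨅ ω : ℝ, (∑ s', |v s' - ω| ^ q) ^ (1 / q))
          + R₀ s a + γ * ∑ s', P₀ s a s' * v s')) ∧
    IsGreatest {y : ℝ | ∃ pol' : A → ℝ, (∀ a, 0 ≤ pol' a) ∧ (∑ a, pol' a = 1) ∧
        y = ∑ a, pol' a * (-(α s a)
              - γ * β s a * (⨅ ω : ℝ, (∑ s', |v s' - ω| ^ q) ^ (1 / q))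
              + R₀ s a + γ * ∑ s', P₀ s a s' * v s')}
      (Finset.univ.sup' Finset.univ_nonempty (fun a =>
        -(α s a) - γ * β s a * (⨅ ω : ℝ, (∑ s', |v s' - ω| ^ q) ^ (1 / q))
          + R₀ s a + γ * ∑ s', P₀ s a s' * v s')) := by
  have hpq : p.HolderConjugate q := (Real.holderConjugate_iff_eq_conjExponent hp).2 hq
  have hq1 : 1 < q := hpq.symm.lt
  have hp0 : p ≠ 0 := hpq.ne_zero
  have hq0 : q ≠ 0 := hpq.symm.ne_zero
  set κ := ⨅ ω : ℝ, (∑ s', |v s' - ω| ^ q) ^ (1 / q) with hκdef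
  have hNnonneg : ∀ ω : ℝ, 0 ≤ (∑ s', |v s' - ω| ^ q) ^ (1 / q) := fun ω =>
    Real.rpow_nonneg (Finset.sum_nonneg fun _ _ => Real.rpow_nonneg (abs_nonneg _) _) _
  have hbdd : BddBelow (Set.range fun ω : ℝ => (∑ s', |v s' - ω| ^ q) ^ (1 / q)) := by
    refine ⟨0, ?_⟩; rintro x ⟨ω, rfl⟩; exact hNnonneg ω
  have hκ0 : 0 ≤ κ := le_ciInf hNnonneg
  -- Hölder lower bound
  have key : ∀ (u : S → ℝ) (b : ℝ), 0 ≤ b → (∑ s', u s' = 0) →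
      (∑ s', |u s'| ^ p) ^ (1 / p) ≤ b → -(b * κ) ≤ ∑ s', u s' * v s' := by
    intro u b hb hsum hnorm
    have hω : ∀ ω : ℝ, -(∑ s', u s' * v s') ≤ b * (∑ s', |v s' - ω| ^ q) ^ (1 / q) := by
      intro ω
      have h1 := Real.inner_le_Lp_mul_Lq (s := Finset.univ) u (fun s' => ω - v s') hpq
      have h2 : ∑ s', u s' * (ω - v s') = -(∑ s', u s' * v s') := by
        have h : ∑ s', u s' * (ω - v s') = (∑ s', u s') * ω - ∑ s', u s' * v s' := by
          rw [Finset.sum_mul, ← Finset.sum_sub_distrib]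
          exact Finset.sum_congr rfl fun s' _ => by ring
        rw [h, hsum, zero_mul, zero_sub]
      have h3 : (∑ s', |ω - v s'| ^ q) = ∑ s', |v s' - ω| ^ q :=
        Finset.sum_congr rfl fun s' _ => by rw [abs_sub_comm]
      rw [h2, h3] at h1
      calc -(∑ s', u s' * v s') ≤ (∑ s', |u s'| ^ p) ^ (1 / p) *
            (∑ s', |v s' - ω| ^ q) ^ (1 / q) := h1
        _ ≤ b * (∑ s', |v s' - ω| ^ q) ^ (1 / q) :=
            mul_le_mul_of_nonneg_right hnorm (hNnonneg ω)
    rcases hb.eq_or_lt with h | h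
    · have h' := hω 0
      rw [← h] at h' ⊢
      simpa using h'
    · have hle : -(∑ s', u s' * v s') / b ≤ κ := by
        refine le_ciInf fun ω => ?_
        rw [div_le_iff₀ h]
        calc -(∑ s', u s' * v s') ≤ b * (∑ s', |v s' - ω| ^ q) ^ (1 / q) := hω ω
          _ = (∑ s', |v s' - ω| ^ q) ^ (1 / q) * b := mul_comm _ _
      rw [div_le_iff₀ h] at hle
      nlinarith
  -- existence of the balancing shift
  obtain ⟨ωh, hg0⟩ : ∃ ωh : ℝ, ∑ s', phiAux q (v s' - ωh) = 0 := by
    have hgc : Continuous fun ω : ℝ => ∑ s', phiAux q (v s' - ω) :=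
      continuous_finset_sum _ fun s' _ =>
        (phiAux_cont hq1).comp (continuous_const.sub continuous_id)
    have hmM : Finset.univ.inf' Finset.univ_nonempty v ≤
        Finset.univ.sup' Finset.univ_nonempty v := by
      obtain ⟨s₀⟩ := (inferInstance : Nonempty S)
      exact le_trans (Finset.inf'_le _ (Finset.mem_univ s₀))
        (Finset.le_sup' _ (Finset.mem_univ s₀))
    have hgm : 0 ≤ ∑ s', phiAux q (v s' - Finset.univ.inf' Finset.univ_nonempty v) :=
      Finset.sum_nonneg fun s' _ =>
        phiAux_nonneg hq1 (sub_nonneg.2 (Finset.inf'_le _ (Finset.mem_univ s')))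
    have hgM : ∑ s', phiAux q (v s' - Finset.univ.sup' Finset.univ_nonempty v) ≤ 0 :=
      Finset.sum_nonpos fun s' _ =>
        phiAux_nonpos hq1 (sub_nonpos.2 (Finset.le_sup' _ (Finset.mem_univ s')))
    obtain ⟨ωh, -, hωh⟩ := intermediate_value_Icc' hmM hgc.continuousOn ⟨hgM, hgm⟩
    exact ⟨ωh, hωh⟩
  set c := ∑ s', |v s' - ωh| ^ q with hcdef
  have hc0 : 0 ≤ c := Finset.sum_nonneg fun _ _ => Real.rpow_nonneg (abs_nonneg _) _
  have hκK : κ ≤ c ^ (1 / q) := ciInf_le hbdd ωh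
  -- the optimal unit-norm noise direction
  obtain ⟨uh, huhsum, huhnorm, huhv⟩ : ∃ uh : S → ℝ, (∑ s', uh s' = 0) ∧
      ((∑ s', |uh s'| ^ p) ^ (1 / p) ≤ 1) ∧ (∑ s', uh s' * v s' = -κ) := by
    rcases hc0.eq_or_lt with hcz | hcpos
    · refine ⟨fun _ => 0, by simp, ?_, ?_⟩
      · rw [show (∑ _s' : S, |(0:ℝ)| ^ p) = 0 by simp [Real.zero_rpow hp0],
          Real.zero_rpow (by positivity : (1:ℝ)/p ≠ 0)]
        norm_num
      · have hK0 : c ^ (1 / q) = 0 := by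
          rw [← hcz, Real.zero_rpow (by positivity : (1:ℝ)/q ≠ 0)]
        have hκz : κ = 0 := le_antisymm (hK0 ▸ hκK) hκ0
        simp [hκz]
    · set D := c ^ (1 / p) with hD
      have hDpos : 0 < D := Real.rpow_pos_of_pos hcpos _
      set uh : S → ℝ := fun s' => -(phiAux q (v s' - ωh)) / D with huhdef
      have h1 : ∑ s', uh s' = 0 := by
        rw [← Finset.sum_div,
          show (∑ s', -(phiAux q (v s' - ωh))) = 0 by
            rw [Finset.sum_neg_distrib, hg0, neg_zero]]
        exact zero_div _
      have habs : ∀ s', |uh s'| ^ p = |v s' - ωh| ^ q / c := by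
        intro s'
        rw [huhdef]
        rw [abs_div, abs_neg, phiAux_abs hq1, abs_of_pos hDpos,
          Real.div_rpow (Real.rpow_nonneg (abs_nonneg _) _) hDpos.le,
          ← Real.rpow_mul (abs_nonneg _), hpq.symm.sub_one_mul_conj,
          hD, ← Real.rpow_mul hc0, one_div_mul_cancel hp0, Real.rpow_one]
      have h2 : (∑ s', |uh s'| ^ p) ^ (1 / p) ≤ 1 := by
        rw [Finset.sum_congr rfl fun s' _ => habs s', ← Finset.sum_div, ← hcdef,
          div_self hcpos.ne', Real.one_rpow]
      have hsub : (1:ℝ) - 1/p = 1/q := by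
        have h := hpq.inv_add_inv_eq_one
        rw [inv_eq_one_div, inv_eq_one_div] at h
        linarith
      have h3 : ∑ s', uh s' * v s' = -(c ^ (1 / q)) := by
        have hterm : ∀ s', uh s' * v s' = -(|v s' - ωh| ^ q) / D + ωh * uh s' := by
          intro s'
          have hm := phiAux_mul hq1 (v s' - ωh)
          rw [huhdef, ← hm]
          ring
        rw [Finset.sum_congr rfl fun s' _ => hterm s', Finset.sum_add_distrib,
          ← Finset.mul_sum, h1, mul_zero, add_zero, ← Finset.sum_div,
          Finset.sum_neg_distrib, ← hcdef, neg_div]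
        congr 1
        calc c / D = c ^ (1:ℝ) / c ^ (1/p) := by rw [Real.rpow_one, hD]
          _ = c ^ ((1:ℝ) - 1/p) := (Real.rpow_sub hcpos _ _).symm
          _ = c ^ (1/q) := by rw [hsub]
      have hKκ : c ^ (1 / q) ≤ κ := by
        have hk := key uh 1 zero_le_one h1 h2
        rw [h3, one_mul] at hk
        linarith
      refine ⟨uh, h1, h2, ?_⟩
      rw [h3, (le_antisymm hκK hKκ : κ = c ^ (1/q))]
  constructor
  · constructor
    · refine ⟨fun s a => -(α s a), fun s a s' => β s a * uh s', fun s a => ?_, fun s a => ?_,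
        fun s a => ?_, ?_⟩
      · rw [abs_neg, abs_of_nonneg (hα s a)]
      · rw [← Finset.mul_sum, huhsum, mul_zero]
      · have hterm : ∀ s', |β s a * uh s'| ^ p = (β s a) ^ p * |uh s'| ^ p := fun s' => by
          rw [abs_mul, abs_of_nonneg (hβ s a), Real.mul_rpow (hβ s a) (abs_nonneg _)]
        rw [Finset.sum_congr rfl fun s' _ => hterm s', ← Finset.mul_sum,
          Real.mul_rpow (Real.rpow_nonneg (hβ s a) _)
            (Finset.sum_nonneg fun _ _ => Real.rpow_nonneg (abs_nonneg _) _),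
          ← Real.rpow_mul (hβ s a), mul_one_div_cancel hp0, Real.rpow_one]
        calc β s a * (∑ s', |uh s'| ^ p) ^ (1/p) ≤ β s a * 1 :=
              mul_le_mul_of_nonneg_left huhnorm (hβ s a)
          _ = β s a := mul_one _
      · refine Finset.sum_congr rfl fun a _ => ?_
        have hsum' : ∑ s', (P₀ s a s' + β s a * uh s') * v s'
            = (∑ s', P₀ s a s' * v s') + β s a * ∑ s', uh s' * v s' := by
          rw [Finset.mul_sum, ← Finset.sum_add_distrib]
          exact Finset.sum_congr rfl fun s' _ => by ring
        rw [hsum', huhv]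
        ring
    · rintro x ⟨r, u, hr, husum, hunorm, rfl⟩
      refine Finset.sum_le_sum fun a _ => ?_
      refine mul_le_mul_of_nonneg_left ?_ (hpolpos s a)
      have h1 : -(α s a) ≤ r s a := (abs_le.1 (hr s a)).1
      have h2 := key (u s a) (β s a) (hβ s a) (husum s a) (hunorm s a)
      have h3 : ∑ s', (P₀ s a s' + u s a s') * v s'
          = (∑ s', P₀ s a s' * v s') + ∑ s', u s a s' * v s' := by
        rw [← Finset.sum_add_distrib]
        exact Finset.sum_congr rfl fun s' _ => by ring
      rw [h3]
      nlinarith [mul_le_mul_of_nonneg_left h2 hγ0]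
  · classical
    obtain ⟨a₀, -, ha₀⟩ := Finset.exists_mem_eq_sup' Finset.univ_nonempty (fun a =>
      -(α s a) - γ * β s a * κ + R₀ s a + γ * ∑ s', P₀ s a s' * v s')
    constructor
    · refine ⟨fun a => if a = a₀ then 1 else 0, fun a => by dsimp; split <;> norm_num, by simp, ?_⟩
      rw [ha₀]
      simp [ite_mul]
    · rintro y ⟨pol', hpos, hsum, rfl⟩
      calc ∑ a, pol' a * (-(α s a) - γ * β s a * κ + R₀ s a + γ * ∑ s', P₀ s a s' * v s')
          ≤ ∑ a, pol' a * (Finset.univ.sup' Finset.univ_nonempty (fun a =>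
              -(α s a) - γ * β s a * κ + R₀ s a + γ * ∑ s', P₀ s a s' * v s')) :=
            Finset.sum_le_sum fun a _ => mul_le_mul_of_nonneg_left
              (Finset.le_sup' (fun a => -(α s a) - γ * β s a * κ + R₀ s a
                + γ * ∑ s', P₀ s a s' * v s') (Finset.mem_univ a)) (hpos a)
        _ = _ := by rw [← Finset.sum_mul, hsum, one_mul]
end

section
/- In the s-rectangular setting, for every v ∈ ℝ^S, every state s ∈ S, and every policy π (π(·|s) ∈ Δ_A): min over all reward noises r_s : A → ℝ with ‖r_s‖_p ≤ α_s and all kernel noises u_s : S × A → ℝ with ‖u_s‖_p ≤ β_s (the ℓ_p norm over all pairs (s',a)) and ∑_{s'} u_s(s',a) = 0 for every a ∈ A, of ∑_{a} π(a|s)[R₀(s,a) + r_s(a) + γ ∑_{s'} (P₀(s'|s,a) + u_s(s',a)) v(s')], equals −(α_s + γ β_s κ_q(v))·‖π(·|s)‖_q + ∑_{a} π(a|s)[R₀(s,a) + γ ∑_{s'} P₀(s'|s,a) v(s')], where ‖π(·|s)‖_q is the ℓ_q norm of the vector π(·|s) ∈ Δ_A. -/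
open Finset Real

/-- derivative-based first-order condition at a minimizer of `ω ↦ ∑ |v - ω|^q`. -/
lemma stmt5_foc {S : Type*} [Fintype S] (v : S → ℝ) {q : ℝ} (hq1 : 1 < q) (ω₀ : ℝ)
    (hmin : ∀ ω, (∑ s', |v s' - ω₀| ^ q) ≤ ∑ s', |v s' - ω| ^ q) :
    ∑ s', |v s' - ω₀| ^ (q - 2) * (v s' - ω₀) = 0 := by
  have hd : HasDerivAt (fun ω => ∑ s', |v s' - ω| ^ q)
      (∑ s', q * |v s' - ω₀| ^ (q - 2) * (v s' - ω₀) * (-1)) ω₀ := by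
    apply HasDerivAt.fun_sum
    intro i _
    have h1 := (hasDerivAt_abs_rpow (v i - ω₀) hq1).comp ω₀
      ((hasDerivAt_id ω₀).const_sub (v i))
    simpa [Function.comp_def] using h1
  have hloc : IsLocalMin (fun ω => ∑ s', |v s' - ω| ^ q) ω₀ :=
    Filter.Eventually.of_forall hmin
  have h0 := hloc.hasDerivAt_eq_zero hd
  have hqne : q ≠ 0 := by positivity
  have h2 : (∑ s', q * |v s' - ω₀| ^ (q - 2) * (v s' - ω₀) * (-1))
      = -q * ∑ s', |v s' - ω₀| ^ (q - 2) * (v s' - ω₀) := by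
    rw [Finset.mul_sum]
    exact Finset.sum_congr rfl fun i _ => by ring
  rw [h2] at h0
  rcases mul_eq_zero.1 h0 with h | h
  · exact absurd h (by simpa using hqne)
  · exact h

/-- existence of a global minimizer for `ω ↦ ∑ |v - ω|^q`. -/
lemma stmt5_exists_min {S : Type*} [Fintype S] [Nonempty S] (v : S → ℝ) {q : ℝ} (hq1 : 1 < q) :
    ∃ ω₀ : ℝ, ∀ ω, (∑ s', |v s' - ω₀| ^ q) ≤ ∑ s', |v s' - ω| ^ q := by
  have hq0 : (0:ℝ) ≤ q := by linarith
  set a := Finset.univ.inf' Finset.univ_nonempty v with ha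
  set b := Finset.univ.sup' Finset.univ_nonempty v with hb
  have hav : ∀ i, a ≤ v i := fun i => Finset.inf'_le v (Finset.mem_univ i)
  have hvb : ∀ i, v i ≤ b := fun i => Finset.le_sup' v (Finset.mem_univ i)
  have hab : a ≤ b := le_trans (hav (Classical.arbitrary S)) (hvb _)
  have hcont : Continuous (fun ω => ∑ s' : S, |v s' - ω| ^ q) := by
    apply continuous_finset_sum
    intro i _
    have hd : ∀ ω : ℝ, HasDerivAt (fun ω => |v i - ω| ^ q)
        (q * |v i - ω| ^ (q - 2) * (v i - ω) * (-1)) ω := by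
      intro ω
      have h1 := (hasDerivAt_abs_rpow (v i - ω) hq1).comp ω
        ((hasDerivAt_id ω).const_sub (v i))
      simpa [Function.comp_def] using h1
    exact continuous_iff_continuousAt.2 fun ω => (hd ω).continuousAt
  obtain ⟨ω₀, -, hm⟩ := (isCompact_Icc (a := a) (b := b)).exists_isMinOn
    (Set.nonempty_Icc.2 hab) hcont.continuousOn
  refine ⟨ω₀, fun ω => ?_⟩
  rcases le_or_gt a ω with h1 | h1
  · rcases le_or_gt ω b with h2 | h2
    · exact hm ⟨h1, h2⟩
    · refine le_trans (hm (Set.right_mem_Icc.2 hab)) ?_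
      apply Finset.sum_le_sum
      intro i _
      apply Real.rpow_le_rpow (abs_nonneg _) _ hq0
      rw [abs_of_nonpos (by linarith [hvb i] : v i - b ≤ 0),
        abs_of_nonpos (by linarith [hvb i] : v i - ω ≤ 0)]
      linarith
  · refine le_trans (hm (Set.left_mem_Icc.2 hab)) ?_
    apply Finset.sum_le_sum
    intro i _
    apply Real.rpow_le_rpow (abs_nonneg _) _ hq0
    rw [abs_of_nonneg (by linarith [hav i]), abs_of_nonneg (by linarith [hav i])]
    linarith [hav i]
open Finset Real

/-- s-rectangular `L_p` robust Bellman operator equals the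
reward-value-policy regularized non-robust Bellman operator, with policy
penalty `(α_s + γ β_s κ_q(v)) ‖π(·|s)‖_q`.  `κ_q(v) = ⨅ ω, ‖v - ω·𝟙‖_q`. -/
theorem stmt5 (S A : Type*) [Fintype S] [Fintype A] [Nonempty S] [Nonempty A]
    (P₀ : S → A → S → ℝ) (hP₀pos : ∀ s a s', 0 ≤ P₀ s a s')
    (hP₀sum : ∀ s a, ∑ s', P₀ s a s' = 1)
    (R₀ : S → A → ℝ) (γ : ℝ) (hγ0 : 0 ≤ γ) (hγ1 : γ < 1)
    (p q : ℝ) (hp : 1 < p) (hq : q = p / (p - 1))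
    (α β : S → ℝ) (hα : ∀ s, 0 ≤ α s) (hβ : ∀ s, 0 ≤ β s)
    (v : S → ℝ) (s : S)
    (pol : S → A → ℝ) (hpolpos : ∀ s a, 0 ≤ pol s a)
    (hpolsum : ∀ s, ∑ a, pol s a = 1) :
    IsLeast {x : ℝ | ∃ (r : S → A → ℝ) (u : S → A → S → ℝ),
        (∀ s, (∑ a, |r s a| ^ p) ^ (1 / p) ≤ α s) ∧
        (∀ s a, ∑ s', u s a s' = 0) ∧
        (∀ s, (∑ a, ∑ s', |u s a s'| ^ p) ^ (1 / p) ≤ β s) ∧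
        x = ∑ a, pol s a * (R₀ s a + r s a +
              γ * ∑ s', (P₀ s a s' + u s a s') * v s')}
      (-(α s + γ * β s * (⨅ ω : ℝ, (∑ s', |v s' - ω| ^ q) ^ (1 / q)))
          * (∑ a, |pol s a| ^ q) ^ (1 / q)
        + ∑ a, pol s a * (R₀ s a + γ * ∑ s', P₀ s a s' * v s')) := by
  classical
  have hp0 : (0:ℝ) < p := lt_trans one_pos hp
  have hpne : p ≠ 0 := ne_of_gt hp0
  have hpq : p.HolderConjugate q := by
    rw [hq]; exact Real.HolderConjugate.conjExponent hp
  have hq1 : 1 < q := hpq.symm.lt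
  have hq0 : (0:ℝ) < q := hpq.symm.pos
  have hqne : q ≠ 0 := ne_of_gt hq0
  have hqp : (q - 1) * p = q := by linear_combination hpq.mul_eq_add
  -- minimizer of ω ↦ ∑ |v - ω|^q
  obtain ⟨ω₀, hmin⟩ := stmt5_exists_min v hq1
  have hGnn : ∀ ω : ℝ, (0:ℝ) ≤ ∑ s', |v s' - ω| ^ q :=
    fun ω => Finset.sum_nonneg fun i _ => Real.rpow_nonneg (abs_nonneg _) _
  set Z : ℝ := (∑ s', |v s' - ω₀| ^ q) ^ (1/q) with hZdef
  have hZnn : 0 ≤ Z := Real.rpow_nonneg (hGnn ω₀) _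
  have hκ : (⨅ ω : ℝ, (∑ s', |v s' - ω| ^ q) ^ (1 / q)) = Z := by
    apply le_antisymm
    · exact ciInf_le ⟨0, by rintro x ⟨ω, rfl⟩; exact Real.rpow_nonneg (hGnn ω) _⟩ ω₀
    · exact le_ciInf fun ω => Real.rpow_le_rpow (hGnn ω₀) (hmin ω) (by positivity)
  have hGZ : ∑ s', |v s' - ω₀| ^ q = Z ^ q := by
    rw [hZdef, one_div, Real.rpow_inv_rpow (hGnn ω₀) hqne]
  -- the q-norm of the policy row
  have hπnn : ∀ a, 0 ≤ pol s a := hpolpos s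
  have hSq : 0 < ∑ a, |pol s a| ^ q := by
    obtain ⟨a₀, -, h⟩ := Finset.exists_ne_zero_of_sum_ne_zero
      (by rw [hpolsum s]; exact one_ne_zero)
    exact Finset.sum_pos' (fun i _ => Real.rpow_nonneg (abs_nonneg _) _)
      ⟨a₀, Finset.mem_univ _, Real.rpow_pos_of_pos (abs_pos.2 h) _⟩
  set N : ℝ := (∑ a, |pol s a| ^ q) ^ (1/q) with hNdef
  have hN : 0 < N := Real.rpow_pos_of_pos hSq _
  have hNq : N ^ q = ∑ a, |pol s a| ^ q := by
    rw [hNdef, one_div, Real.rpow_inv_rpow hSq.le hqne]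
  have hxq : ∀ x : ℝ, 0 ≤ x → x * x ^ (q-1) = x ^ q := by
    intro x hx
    nth_rewrite 1 [← Real.rpow_one x]
    rw [← Real.rpow_add' hx (by simpa using hqne : (1:ℝ) + (q-1) ≠ 0)]
    norm_num

  -- dual vector for the policy
  set c : A → ℝ := fun a => pol s a ^ (q-1) / N ^ (q-1) with hcdef
  have hcnn : ∀ a, 0 ≤ c a := fun a =>
    div_nonneg (Real.rpow_nonneg (hπnn a) _) (Real.rpow_nonneg hN.le _)
  have hcp : ∀ a, c a ^ p = |pol s a| ^ q / N ^ q := by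
    intro a
    simp only [hcdef]
    rw [Real.div_rpow (Real.rpow_nonneg (hπnn a) _) (Real.rpow_nonneg hN.le _),
      ← Real.rpow_mul (hπnn a), ← Real.rpow_mul hN.le, hqp, abs_of_nonneg (hπnn a)]
  have hcsum : ∑ a, c a ^ p = 1 := by
    rw [Finset.sum_congr rfl fun a _ => hcp a, ← Finset.sum_div, ← hNq,
      div_self (ne_of_gt (Real.rpow_pos_of_pos hN q))]
  have hπc : ∑ a, pol s a * c a = N := by
    have h1 : ∀ a, pol s a * c a = |pol s a| ^ q / N ^ (q-1) := by
      intro a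
      simp only [hcdef]
      rw [abs_of_nonneg (hπnn a), ← mul_div_assoc, hxq _ (hπnn a)]
    rw [Finset.sum_congr rfl fun a _ => h1 a, ← Finset.sum_div, ← hNq,
      div_eq_iff (ne_of_gt (Real.rpow_pos_of_pos hN (q-1)))]
    exact (hxq N hN.le).symm
  -- dual vector for the value part
  set D : S → ℝ := fun s' => |v s' - ω₀| ^ (q-2) * (v s' - ω₀) with hDdef
  have hfoc : ∑ s', D s' = 0 := stmt5_foc v hq1 ω₀ hmin
  have hq1ne : q - 1 ≠ 0 := by linarith
  have hDabs : ∀ s', |D s'| = |v s' - ω₀| ^ (q-1) := by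
    intro s'
    by_cases h : v s' - ω₀ = 0
    · simp [hDdef, h, Real.zero_rpow hq1ne]
    · have h2 : |v s' - ω₀| ^ (q-1) = |v s' - ω₀| ^ (q-2) * |v s' - ω₀| ^ (1:ℝ) := by
        rw [← Real.rpow_add (abs_pos.2 h), show q-2+1 = q-1 by ring]
      simp only [hDdef]
      rw [h2, Real.rpow_one, abs_mul, abs_of_nonneg (Real.rpow_nonneg (abs_nonneg _) _)]
  have hDz : ∀ s', (v s' - ω₀) * D s' = |v s' - ω₀| ^ q := by
    intro s'
    by_cases h : v s' - ω₀ = 0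
    · simp [hDdef, h, Real.zero_rpow hqne]
    · have h2 : |v s' - ω₀| ^ q = |v s' - ω₀| ^ (q-2) * |v s' - ω₀| ^ (2:ℝ) := by
        rw [← Real.rpow_add (abs_pos.2 h), show q-2+2 = q by ring]
      simp only [hDdef]
      rw [h2, show (2:ℝ) = ((2:ℕ):ℝ) by norm_num, Real.rpow_natCast, sq_abs]
      ring
  set w : S → ℝ := fun s' => -(D s') / Z ^ (q-1) with hwdef
  have hwsum : ∑ s', w s' = 0 := by
    simp only [hwdef]
    rw [← Finset.sum_div, Finset.sum_neg_distrib, hfoc, neg_zero, zero_div]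
  have hwv : ∑ s', w s' * v s' = -Z := by
    by_cases hG0 : (∑ s', |v s' - ω₀| ^ q) = 0
    · have hz : ∀ s', v s' - ω₀ = 0 := by
        intro s'
        have h1 := (Finset.sum_eq_zero_iff_of_nonneg
          (fun i _ => Real.rpow_nonneg (abs_nonneg (v i - ω₀)) q)).1 hG0 s' (Finset.mem_univ _)
        have h2 : |v s' - ω₀| = 0 := by
          by_contra h3
          exact absurd h1 (ne_of_gt (Real.rpow_pos_of_pos (abs_pos.2 (fun h4 => h3 (by rw [h4]; simp))) q))
        exact abs_eq_zero.1 h2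
      have hZ0 : Z = 0 := by rw [hZdef, hG0, Real.zero_rpow (by positivity : 1/q ≠ 0)]
      rw [hZ0, neg_zero]
      apply Finset.sum_eq_zero
      intro s' _
      simp [hwdef, hDdef, hz s']
    · have hZpos : 0 < Z :=
        Real.rpow_pos_of_pos (lt_of_le_of_ne (hGnn ω₀) (Ne.symm hG0)) _
      have h1 : ∀ s', w s' * v s' = -((v s' - ω₀) * D s') / Z ^ (q-1) + ω₀ * w s' := by
        intro s'; simp only [hwdef]; ring
      rw [Finset.sum_congr rfl fun s' _ => h1 s', Finset.sum_add_distrib,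
        ← Finset.mul_sum, hwsum, mul_zero, add_zero, ← Finset.sum_div,
        Finset.sum_neg_distrib, Finset.sum_congr rfl fun s' _ => hDz s', hGZ,
        div_eq_iff (ne_of_gt (Real.rpow_pos_of_pos hZpos (q-1))), ← hxq Z hZnn]
      ring

  have hzcase : (∑ s', |v s' - ω₀| ^ q) = 0 → ∀ s', v s' - ω₀ = 0 := by
    intro hG0 s'
    have h1 := (Finset.sum_eq_zero_iff_of_nonneg
      (fun i _ => Real.rpow_nonneg (abs_nonneg (v i - ω₀)) q)).1 hG0 s' (Finset.mem_univ _)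
    by_contra h3
    exact absurd h1 (ne_of_gt (Real.rpow_pos_of_pos (abs_pos.2 h3) q))
  have hwp : ∑ s', |w s'| ^ p ≤ 1 := by
    by_cases hG0 : (∑ s', |v s' - ω₀| ^ q) = 0
    · have hw0 : ∀ s', w s' = 0 := fun s' => by simp [hwdef, hDdef, hzcase hG0 s']
      rw [Finset.sum_congr rfl fun s' _ =>
        (by rw [hw0 s', abs_zero, Real.zero_rpow hpne] : |w s'| ^ p = 0)]
      simp
    · have hZpos : 0 < Z :=
        Real.rpow_pos_of_pos (lt_of_le_of_ne (hGnn ω₀) (Ne.symm hG0)) _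
      have h1 : ∀ s', |w s'| ^ p = |v s' - ω₀| ^ q / Z ^ q := by
        intro s'
        simp only [hwdef]
        rw [abs_div, abs_neg, hDabs, abs_of_nonneg (Real.rpow_nonneg hZnn _),
          Real.div_rpow (Real.rpow_nonneg (abs_nonneg _) _) (Real.rpow_nonneg hZnn _),
          ← Real.rpow_mul (abs_nonneg _), ← Real.rpow_mul hZnn, hqp]
      rw [Finset.sum_congr rfl fun s' _ => h1 s', ← Finset.sum_div, hGZ,
        div_self (ne_of_gt (Real.rpow_pos_of_pos hZpos q))]
  -- reward noise witness
  have hr : ∃ r : S → A → ℝ, (∀ t, (∑ a, |r t a| ^ p) ^ (1 / p) ≤ α t) ∧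
      ∑ a, pol s a * r s a = -(α s * N) := by
    refine ⟨fun t a => if t = s then -(α s * c a) else 0, ?_, ?_⟩
    · intro t
      by_cases ht : t = s
      · subst ht
        simp only [eq_self_iff_true, if_true]
        have h1 : ∀ a, |-(α t * c a)| ^ p = α t ^ p * c a ^ p := by
          intro a
          rw [abs_neg, abs_mul, abs_of_nonneg (hα t), abs_of_nonneg (hcnn a),
            Real.mul_rpow (hα t) (hcnn a)]
        rw [Finset.sum_congr rfl fun a _ => h1 a, ← Finset.mul_sum, hcsum, mul_one,
          ← Real.rpow_mul (hα t), mul_one_div, div_self hpne, Real.rpow_one]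
      · simp only [if_neg ht]
        rw [Finset.sum_congr rfl fun a _ =>
          (by rw [abs_zero, Real.zero_rpow hpne] : |(0:ℝ)| ^ p = 0),
          Finset.sum_const_zero, Real.zero_rpow (one_div_ne_zero hpne)]
        exact hα t
    · simp only [eq_self_iff_true, if_true]
      have h1 : ∀ a, pol s a * (-(α s * c a)) = -(α s * (pol s a * c a)) := fun a => by ring
      rw [Finset.sum_congr rfl fun a _ => h1 a, Finset.sum_neg_distrib, ← Finset.mul_sum, hπc]
  -- kernel noise witness
  have hu : ∃ u : S → A → S → ℝ, (∀ t a, ∑ s', u t a s' = 0) ∧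
      (∀ t, (∑ a, ∑ s', |u t a s'| ^ p) ^ (1 / p) ≤ β t) ∧
      ∑ a, pol s a * ∑ s', u s a s' * v s' = -(β s * Z * N) := by
    refine ⟨fun t a s' => if t = s then β s * c a * w s' else 0, ?_, ?_, ?_⟩
    · intro t a
      by_cases ht : t = s
      · subst ht
        simp only [eq_self_iff_true, if_true]
        rw [← Finset.mul_sum, hwsum, mul_zero]
      · simp [if_neg ht]
    · intro t
      by_cases ht : t = s
      · subst ht
        simp only [eq_self_iff_true, if_true]
        have h1 : ∀ (a : A) (s' : S), |β t * c a * w s'| ^ p = β t ^ p * c a ^ p * |w s'| ^ p := by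
          intro a s'
          rw [abs_mul, abs_mul, abs_of_nonneg (hβ t), abs_of_nonneg (hcnn a),
            Real.mul_rpow (mul_nonneg (hβ t) (hcnn a)) (abs_nonneg _),
            Real.mul_rpow (hβ t) (hcnn a)]
        have h2 : (∑ a, ∑ s', |β t * c a * w s'| ^ p) ≤ β t ^ p := by
          calc ∑ a, ∑ s', |β t * c a * w s'| ^ p
              = ∑ a : A, β t ^ p * c a ^ p * ∑ s', |w s'| ^ p := by
                refine Finset.sum_congr rfl fun a _ => ?_
                rw [Finset.mul_sum]
                exact Finset.sum_congr rfl fun s' _ => h1 a s'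
            _ ≤ ∑ a : A, β t ^ p * c a ^ p * 1 := by
                refine Finset.sum_le_sum fun a _ => ?_
                exact mul_le_mul_of_nonneg_left hwp
                  (mul_nonneg (Real.rpow_nonneg (hβ t) _) (Real.rpow_nonneg (hcnn a) _))
            _ = β t ^ p := by
                simp only [mul_one]
                rw [← Finset.mul_sum, hcsum, mul_one]
        calc (∑ a, ∑ s', |β t * c a * w s'| ^ p) ^ (1/p)
            ≤ (β t ^ p) ^ (1/p) := by
              apply Real.rpow_le_rpow _ h2 (by positivity)
              exact Finset.sum_nonneg fun a _ =>
                Finset.sum_nonneg fun s' _ => Real.rpow_nonneg (abs_nonneg _) _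
          _ = β t := by
              rw [← Real.rpow_mul (hβ t), mul_one_div, div_self hpne, Real.rpow_one]
      · simp only [if_neg ht]
        rw [Finset.sum_congr rfl fun a _ => Finset.sum_congr rfl fun s' _ =>
          (by rw [abs_zero, Real.zero_rpow hpne] : |(0:ℝ)| ^ p = 0)]
        rw [Finset.sum_congr rfl fun a _ => Finset.sum_const_zero,
          Finset.sum_const_zero, Real.zero_rpow (one_div_ne_zero hpne)]
        exact hβ t
    · simp only [eq_self_iff_true, if_true]
      have h1 : ∀ a, pol s a * ∑ s', (β s * c a * w s') * v s'
          = β s * (pol s a * c a) * ∑ s', w s' * v s' := by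
        intro a
        have h2 : ∀ s', (β s * c a * w s') * v s' = (β s * c a) * (w s' * v s') :=
          fun s' => by ring
        rw [Finset.sum_congr rfl fun s' _ => h2 s', ← Finset.mul_sum]
        ring
      rw [Finset.sum_congr rfl fun a _ => h1 a, hwv]
      have h3 : ∀ a, β s * (pol s a * c a) * -Z = -(β s * Z) * (pol s a * c a) :=
        fun a => by ring
      rw [Finset.sum_congr rfl fun a _ => h3 a, ← Finset.mul_sum, hπc]
      ring
  -- splitting of the objective
  have hsplit : ∀ (r : S → A → ℝ) (u : S → A → S → ℝ),
      ∑ a, pol s a * (R₀ s a + r s a + γ * ∑ s', (P₀ s a s' + u s a s') * v s')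
      = (∑ a, pol s a * (R₀ s a + γ * ∑ s', P₀ s a s' * v s'))
        + (∑ a, pol s a * r s a) + γ * ∑ a, pol s a * ∑ s', u s a s' * v s' := by
    intro r u
    have h1 : ∀ a, pol s a * (R₀ s a + r s a + γ * ∑ s', (P₀ s a s' + u s a s') * v s')
        = pol s a * (R₀ s a + γ * ∑ s', P₀ s a s' * v s') + pol s a * r s a
          + γ * (pol s a * ∑ s', u s a s' * v s') := by
      intro a
      have h2 : ∑ s', (P₀ s a s' + u s a s') * v s'
          = (∑ s', P₀ s a s' * v s') + ∑ s', u s a s' * v s' := by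
        rw [← Finset.sum_add_distrib]
        exact Finset.sum_congr rfl fun s' _ => by ring
      rw [h2]; ring
    rw [Finset.sum_congr rfl fun a _ => h1 a, Finset.sum_add_distrib,
      Finset.sum_add_distrib, ← Finset.mul_sum]
  constructor
  · -- membership
    obtain ⟨r, hrn, hrv⟩ := hr
    obtain ⟨u, hu0, hun, huv⟩ := hu
    refine ⟨r, u, hrn, hu0, hun, ?_⟩
    rw [hκ, hsplit r u, hrv, huv]
    ring
  · -- lower bound
    rintro x ⟨r, u, hrn, hu0, hun, hx⟩
    have hT1 : -(α s * N) ≤ ∑ a, pol s a * r s a := by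
      have h1 := Real.inner_le_Lp_mul_Lq Finset.univ (fun a => -(r s a)) (pol s) hpq
      simp only [abs_neg] at h1
      have h2 : (∑ a, |r s a| ^ p) ^ (1/p) * N ≤ α s * N :=
        mul_le_mul_of_nonneg_right (hrn s) hN.le
      have h4 : ∑ a, -(r s a) * pol s a = -∑ a, pol s a * r s a := by
        rw [Finset.sum_congr rfl fun a _ =>
          (by ring : -(r s a) * pol s a = -(pol s a * r s a)), Finset.sum_neg_distrib]
      rw [h4] at h1
      have := le_trans h1 h2
      linarith
    have hT2 : -(β s * Z * N) ≤ ∑ a, pol s a * ∑ s', u s a s' * v s' := by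
      set k : A → ℝ := fun a => (∑ s', |u s a s'| ^ p) ^ (1/p) with hkdef
      have hknn : ∀ a, 0 ≤ k a := fun a =>
        Real.rpow_nonneg (Finset.sum_nonneg fun i _ => Real.rpow_nonneg (abs_nonneg _) _) _
      have hkp : ∀ a, |k a| ^ p = ∑ s', |u s a s'| ^ p := by
        intro a
        rw [abs_of_nonneg (hknn a)]
        simp only [hkdef]
        rw [one_div, Real.rpow_inv_rpow
          (Finset.sum_nonneg fun i _ => Real.rpow_nonneg (abs_nonneg _) _) hpne]
      have ha : ∀ a, -(∑ s', u s a s' * v s') ≤ k a * Z := by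
        intro a
        have e1 : ∑ s', u s a s' * v s' = ∑ s', u s a s' * (v s' - ω₀) := by
          rw [Finset.sum_congr rfl fun s' _ =>
            (by ring : u s a s' * (v s' - ω₀) = u s a s' * v s' - ω₀ * u s a s'),
            Finset.sum_sub_distrib, ← Finset.mul_sum, hu0 s a, mul_zero, sub_zero]
        have h1 := Real.inner_le_Lp_mul_Lq Finset.univ (fun s' => -(u s a s'))
          (fun s' => v s' - ω₀) hpq
        simp only [abs_neg] at h1
        have h2 : ∑ s', -(u s a s') * (v s' - ω₀) = -(∑ s', u s a s' * (v s' - ω₀)) := by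
          rw [Finset.sum_congr rfl fun s' _ =>
            (by ring : -(u s a s') * (v s' - ω₀) = -(u s a s' * (v s' - ω₀))),
            Finset.sum_neg_distrib]
        rw [h2] at h1
        calc -(∑ s', u s a s' * v s') = -(∑ s', u s a s' * (v s' - ω₀)) := by rw [e1]
          _ ≤ (∑ s', |u s a s'| ^ p) ^ (1/p) * (∑ s', |v s' - ω₀| ^ q) ^ (1/q) := h1
          _ = k a * Z := by rw [← hZdef]
      have hsum : ∑ a, pol s a * (k a * Z) ≤ β s * Z * N := by
        have h1 := Real.inner_le_Lp_mul_Lq Finset.univ k (pol s) hpq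
        rw [Finset.sum_congr rfl fun a _ => hkp a] at h1
        have h4 : ∑ a, k a * pol s a ≤ β s * N :=
          le_trans h1 (mul_le_mul_of_nonneg_right (hun s) hN.le)
        have h5 : ∑ a, pol s a * (k a * Z) = (∑ a, k a * pol s a) * Z := by
          rw [Finset.sum_mul]
          exact Finset.sum_congr rfl fun a _ => by ring
        rw [h5]
        calc (∑ a, k a * pol s a) * Z ≤ (β s * N) * Z :=
              mul_le_mul_of_nonneg_right h4 hZnn
          _ = β s * Z * N := by ring
      have h6 : -(∑ a, pol s a * ∑ s', u s a s' * v s') ≤ ∑ a, pol s a * (k a * Z) := by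
        have h7 : ∀ a, -(pol s a * ∑ s', u s a s' * v s') ≤ pol s a * (k a * Z) := by
          intro a
          have h8 := mul_le_mul_of_nonneg_left (ha a) (hπnn a)
          calc -(pol s a * ∑ s', u s a s' * v s')
              = pol s a * -(∑ s', u s a s' * v s') := by ring
            _ ≤ pol s a * (k a * Z) := h8
        calc -(∑ a, pol s a * ∑ s', u s a s' * v s')
            = ∑ a, -(pol s a * ∑ s', u s a s' * v s') := by rw [Finset.sum_neg_distrib]
          _ ≤ ∑ a, pol s a * (k a * Z) := Finset.sum_le_sum fun a _ => h7 a
      linarith [le_trans h6 hsum]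
    rw [hκ, hx, hsplit r u]
    have h9 := mul_le_mul_of_nonneg_left hT2 hγ0
    nlinarith [h9, hT1]
end

section
/- Fix v ∈ ℝ^S and s ∈ S; set Q(s,a) := R₀(s,a) + γ ∑_{s'} P₀(s'|s,a) v(s') and σ := α_s + γ β_s κ_q(v), and assume σ > 0. Then the value max_{π_s ∈ Δ_A} ( −σ ‖π_s‖_q + ∑_{a} π_s(a) Q(s,a) ) is equal to the unique real number x satisfying ∑_{a∈A} (Q(s,a) − x)^p · 𝟙[Q(s,a) ≥ x] = σ^p. -/
theorem stmt6_aux (A : Type*) [Fintype A] [Nonempty A]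
    (p q : ℝ) (hp : 1 < p) (hq : q = p / (p - 1))
    (σ : ℝ) (hσpos : 0 < σ) (Q : A → ℝ) :
    ∃ x : ℝ,
      (∑ a, if x ≤ Q a then (Q a - x) ^ p else 0) = σ ^ p ∧
      (∀ y : ℝ, (∑ a, if y ≤ Q a then (Q a - y) ^ p else 0) = σ ^ p → y = x) ∧
      IsGreatest {z : ℝ | ∃ c : A → ℝ, (∀ a, 0 ≤ c a) ∧ (∑ a, c a = 1) ∧
          z = -σ * (∑ a, |c a| ^ q) ^ (1 / q) + ∑ a, c a * Q a} x := by
  have hp0 : (0:ℝ) < p := lt_trans zero_lt_one hp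
  have hpq : p.HolderConjugate q := (Real.holderConjugate_iff_eq_conjExponent hp).2 hq
  have hq0 : (0:ℝ) < q := hpq.symm.pos
  have hqne : q ≠ 0 := hq0.ne'
  have hpqmul : (p - 1) * q = p := hpq.sub_one_mul_conj
  have hdiv : p / q = p - 1 := hpq.div_conj_eq_sub_one
  set F : ℝ → ℝ := fun x => ∑ a, max (Q a - x) 0 ^ p with hF
  have hite : ∀ x : ℝ, (∑ a, if x ≤ Q a then (Q a - x) ^ p else 0) = F x := by
    intro x
    refine Finset.sum_congr rfl fun a _ => ?_
    split_ifs with h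
    · rw [max_eq_left (sub_nonneg.2 h)]
    · rw [max_eq_right (sub_nonpos.2 (le_of_not_ge h)), Real.zero_rpow hp0.ne']
  have hσp : (0:ℝ) < σ ^ p := Real.rpow_pos_of_pos hσpos p
  have hstrict : ∀ {y x : ℝ}, y < x → 0 < F x → F x < F y := by
    intro y x hyx hpos
    obtain ⟨a, -, ha⟩ := Finset.exists_ne_zero_of_sum_ne_zero hpos.ne'
    have h2 : 0 < Q a - x := by
      rcases le_or_gt (Q a - x) 0 with h | h
      · exact absurd (by rw [max_eq_right h, Real.zero_rpow hp0.ne']) ha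
      · exact h
    refine Finset.sum_lt_sum (fun b _ => ?_) ⟨a, Finset.mem_univ a, ?_⟩
    · exact Real.rpow_le_rpow (le_max_right _ _)
        (max_le_max (sub_le_sub_left hyx.le (Q b)) le_rfl) hp0.le
    · rw [max_eq_left h2.le, max_eq_left (by linarith : (0:ℝ) ≤ Q a - y)]
      exact Real.rpow_lt_rpow h2.le (by linarith) hp0
  obtain ⟨astar, -, hmax⟩ :=
    Finset.exists_max_image Finset.univ Q ⟨Classical.arbitrary A, Finset.mem_univ _⟩
  have hFb : F (Q astar) = 0 := by
    refine Finset.sum_eq_zero fun a _ => ?_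
    rw [max_eq_right (sub_nonpos.2 (hmax a (Finset.mem_univ a))), Real.zero_rpow hp0.ne']
  have hFt : σ ^ p ≤ F (Q astar - σ) := by
    have h1 : max (Q astar - (Q astar - σ)) 0 ^ p = σ ^ p := by
      rw [show Q astar - (Q astar - σ) = σ by ring, max_eq_left hσpos.le]
    calc σ ^ p = max (Q astar - (Q astar - σ)) 0 ^ p := h1.symm
      _ ≤ F (Q astar - σ) :=
        Finset.single_le_sum (f := fun a => max (Q a - (Q astar - σ)) 0 ^ p)
          (fun a _ => Real.rpow_nonneg (le_max_right _ _) p) (Finset.mem_univ astar)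
  have hFcont : Continuous F := by
    refine continuous_finset_sum _ fun a _ => ?_
    exact ((continuous_const.sub continuous_id).max continuous_const).rpow_const
      (fun x => Or.inr hp0.le)
  obtain ⟨x, -, hx⟩ := intermediate_value_Icc' (by linarith : Q astar - σ ≤ Q astar)
    hFcont.continuousOn (Set.mem_Icc.2 ⟨hFb ▸ hσp.le, hFt⟩)
  have hFx : F x = σ ^ p := hx
  have hFxpos : 0 < F x := hFx ▸ hσp
  refine ⟨x, by rw [hite, hFx], ?_, ?_⟩
  · intro y hy
    rw [hite] at hy
    rcases lt_trichotomy y x with h | h | h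
    · exact absurd (hy.trans hFx.symm) (hstrict h hFxpos).ne'
    · exact h
    · exact absurd (hFx.trans hy.symm) (hstrict h (hy ▸ hσp)).ne'
  have gnn : ∀ a, (0:ℝ) ≤ max (Q a - x) 0 := fun a => le_max_right _ _
  set N : ℝ := ∑ a, max (Q a - x) 0 ^ (p - 1) with hN
  have hNpos : 0 < N := by
    obtain ⟨a, -, ha⟩ := Finset.exists_ne_zero_of_sum_ne_zero hFxpos.ne'
    have h2 : 0 < max (Q a - x) 0 := by
      rcases (gnn a).lt_or_eq with h | h
      · exact h
      · exact absurd (by rw [← h, Real.zero_rpow hp0.ne']) ha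
    exact Finset.sum_pos' (fun b _ => Real.rpow_nonneg (gnn b) _)
      ⟨a, Finset.mem_univ a, Real.rpow_pos_of_pos h2 _⟩
  set c : A → ℝ := fun a => max (Q a - x) 0 ^ (p - 1) / N with hc
  have hc0 : ∀ a, 0 ≤ c a := fun a => div_nonneg (Real.rpow_nonneg (gnn a) _) hNpos.le
  have hc1 : ∑ a, c a = 1 := by rw [hc]; rw [← Finset.sum_div, ← hN, div_self hNpos.ne']
  have key1 : ∑ a, |c a| ^ q = σ ^ p / N ^ q := by
    have h3 : ∀ a, |c a| ^ q = max (Q a - x) 0 ^ p / N ^ q := by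
      intro a
      rw [abs_of_nonneg (hc0 a), hc]
      rw [Real.div_rpow (Real.rpow_nonneg (gnn a) _) hNpos.le,
        ← Real.rpow_mul (gnn a), hpqmul]
    rw [Finset.sum_congr rfl fun a _ => h3 a, ← Finset.sum_div, ← hFx]
  have key2 : (σ ^ p / N ^ q) ^ (1 / q) = σ ^ (p - 1) / N := by
    rw [Real.div_rpow (Real.rpow_nonneg hσpos.le _) (Real.rpow_nonneg hNpos.le _),
      ← Real.rpow_mul hσpos.le, ← Real.rpow_mul hNpos.le,
      mul_one_div, hdiv, mul_one_div, div_self hqne, Real.rpow_one]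
  have key3 : ∑ a, c a * (Q a - x) = σ ^ p / N := by
    have h4 : ∀ a, max (Q a - x) 0 ^ (p - 1) * (Q a - x) = max (Q a - x) 0 ^ p := by
      intro a
      rcases lt_trichotomy (Q a - x) 0 with h | h | h
      · rw [max_eq_right h.le, Real.zero_rpow (by linarith : p - 1 ≠ 0),
          Real.zero_rpow hp0.ne', zero_mul]
      · rw [h, mul_zero, max_eq_right le_rfl]
        rw [Real.zero_rpow hp0.ne']
      · rw [max_eq_left h.le, ← Real.rpow_add_one h.ne' (p - 1), sub_add_cancel]
    calc ∑ a, c a * (Q a - x)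
        = (∑ a, max (Q a - x) 0 ^ (p - 1) * (Q a - x)) / N := by
          rw [Finset.sum_div]
          exact Finset.sum_congr rfl fun a _ => by rw [hc, div_mul_eq_mul_div]
      _ = (∑ a, max (Q a - x) 0 ^ p) / N := by rw [Finset.sum_congr rfl fun a _ => h4 a]
      _ = σ ^ p / N := by rw [← hFx]
  have hcQ : ∑ a, c a * Q a = σ ^ p / N + x := by
    rw [Finset.sum_congr rfl
        (fun a _ => show c a * Q a = c a * (Q a - x) + c a * x from by ring),
      Finset.sum_add_distrib, key3, ← Finset.sum_mul, hc1, one_mul]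
  have hσσ : σ * σ ^ (p - 1) = σ ^ p := by
    rw [mul_comm, ← Real.rpow_add_one hσpos.ne' (p - 1), sub_add_cancel]
  constructor
  · refine ⟨c, hc0, hc1, ?_⟩
    rw [key1, key2, hcQ, ← hσσ]
    field_simp
    ring
  · rintro z ⟨d, hd0, hd1, rfl⟩
    have hgp : (∑ a, |max (Q a - x) 0| ^ p) ^ (1 / p) = σ := by
      rw [Finset.sum_congr rfl fun a _ => by rw [abs_of_nonneg (gnn a)]]
      rw [show (∑ a, max (Q a - x) 0 ^ p) = σ ^ p from hFx,
        ← Real.rpow_mul hσpos.le, mul_one_div, div_self hp0.ne', Real.rpow_one]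
    have holder := Real.inner_le_Lp_mul_Lq Finset.univ d (fun a => max (Q a - x) 0) hpq.symm
    rw [hgp] at holder
    have h1 : ∑ a, d a * Q a = (∑ a, d a * (Q a - x)) + x := by
      rw [Finset.sum_congr rfl
          (fun a _ => show d a * Q a = d a * (Q a - x) + d a * x from by ring),
        Finset.sum_add_distrib, ← Finset.sum_mul, hd1, one_mul]
    have h2 : ∑ a, d a * (Q a - x) ≤ ∑ a, d a * max (Q a - x) 0 :=
      Finset.sum_le_sum fun a _ => mul_le_mul_of_nonneg_left (le_max_left _ _) (hd0 a)
    have hc3 := mul_comm σ ((∑ a, |d a| ^ q) ^ (1 / q))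
    linarith [holder, h2, h1.le, hc3]



/-- With `Q(s,a) = R₀(s,a) + γ ∑_{s'} P₀(s'|s,a) v(s')` and
`σ = α_s + γ β_s κ_q(v) > 0`, the value `max_{π_s ∈ Δ_A} (-σ ‖π_s‖_q + ⟨π_s, Q(s,·)⟩)`
equals the unique real `x` with `∑_a (Q(s,a) - x)^p 𝟙[Q(s,a) ≥ x] = σ^p`. -/
theorem stmt6 (S A : Type*) [Fintype S] [Fintype A] [Nonempty S] [Nonempty A]
    (P₀ : S → A → S → ℝ) (hP₀pos : ∀ s a s', 0 ≤ P₀ s a s')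
    (hP₀sum : ∀ s a, ∑ s', P₀ s a s' = 1)
    (R₀ : S → A → ℝ) (γ : ℝ) (hγ0 : 0 ≤ γ) (hγ1 : γ < 1)
    (p q : ℝ) (hp : 1 < p) (hq : q = p / (p - 1))
    (α β : S → ℝ) (hα : ∀ s, 0 ≤ α s) (hβ : ∀ s, 0 ≤ β s)
    (v : S → ℝ) (s : S)
    (Q : S → A → ℝ) (hQ : ∀ s a, Q s a = R₀ s a + γ * ∑ s', P₀ s a s' * v s')
    (σ : ℝ) (hσdef : σ = α s + γ * β s * (⨅ ω : ℝ, (∑ s', |v s' - ω| ^ q) ^ (1 / q)))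
    (hσpos : 0 < σ) :
    ∃ x : ℝ,
      (∑ a, if x ≤ Q s a then (Q s a - x) ^ p else 0) = σ ^ p ∧
      (∀ y : ℝ, (∑ a, if y ≤ Q s a then (Q s a - y) ^ p else 0) = σ ^ p → y = x) ∧
      IsGreatest {z : ℝ | ∃ c : A → ℝ, (∀ a, 0 ≤ c a) ∧ (∑ a, c a = 1) ∧
          z = -σ * (∑ a, |c a| ^ q) ^ (1 / q) + ∑ a, c a * Q s a} x := by
  exact stmt6_aux A p q hp hq σ hσpos (Q s)
end

section
/- Suppose v* ∈ ℝ^S satisfies, for every s ∈ S, v*(s) = max_{π_s ∈ Δ_A} ( −σ_s ‖π_s‖_q + ∑_{a} π_s(a) Q(s,a) ), where Q(s,a) := R₀(s,a) + γ ∑_{s'} P₀(s'|s,a) v*(s') and σ_s := α_s + γ β_s κ_q(v*), and assume σ_s > 0 for all s. Then for each s ∈ S the normalizer Z_s := ∑_{a} (Q(s,a) − v*(s))^{p−1} 𝟙[Q(s,a) ≥ v*(s)] is strictly positive, and the policy π*(a|s) := (Q(s,a) − v*(s))^{p−1} 𝟙[Q(s,a) ≥ v*(s)] / Z_s attains the maximum: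 −σ_s ‖π*(·|s)‖_q + ∑_{a} π*(a|s) Q(s,a) = v*(s). -/
open Finset

private lemma aux_stmt7 {A : Type*} [Fintype A] (p q σ v : ℝ) (hp : 1 < p)
    (hq : q = p / (p - 1)) (hσ : 0 < σ) (Q w : A → ℝ)
    (hw : ∀ a, w a = if v ≤ Q a then (Q a - v) ^ (p - 1) else 0)
    (hfix : IsGreatest {z : ℝ | ∃ c : A → ℝ, (∀ a, 0 ≤ c a) ∧ (∑ a, c a = 1) ∧
        z = -σ * (∑ a, |c a| ^ q) ^ (1 / q) + ∑ a, c a * Q a} v) :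
    0 < (∑ a, w a) ∧
      -σ * (∑ a, |w a / ∑ a', w a'| ^ q) ^ (1 / q)
        + ∑ a, (w a / ∑ a', w a') * Q a = v := by
  have hpq : p.HolderConjugate q := (Real.holderConjugate_iff_eq_conjExponent hp).mpr hq
  have hp0 : (0:ℝ) < p := hpq.pos
  have hq0 : (0:ℝ) < q := hpq.symm.pos
  have hp1 : (0:ℝ) < p - 1 := hpq.sub_one_pos
  have hdiv : 1 / p + 1 / q = 1 := by
    simpa [one_div] using hpq.inv_add_inv_eq_one
  -- u a = positive part of Q a - v
  set u : A → ℝ := fun a => if v ≤ Q a then Q a - v else 0 with hu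
  have hu0 : ∀ a, 0 ≤ u a := by
    intro a; simp only [hu]; split_ifs with h
    · linarith
    · exact le_rfl
  have hwu : ∀ a, w a = u a ^ (p - 1) := by
    intro a
    by_cases h : v ≤ Q a <;>
      simp [hw, hu, h, Real.zero_rpow hpq.sub_one_ne_zero]
  have hw0 : ∀ a, 0 ≤ w a := by
    intro a; rw [hwu]; exact Real.rpow_nonneg (hu0 a) _
  -- the witness from membership
  obtain ⟨c, hc0, hc1, hceq⟩ := hfix.1
  set N : ℝ := (∑ a, |c a| ^ q) ^ (1 / q) with hN
  have hNpos : 0 < N := by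
    obtain ⟨a₀, ha₀⟩ : ∃ a, 0 < c a := by
      by_contra h
      push_neg at h
      have : ∀ a ∈ Finset.univ, c a = 0 := fun a _ => le_antisymm (h a) (hc0 a)
      rw [Finset.sum_congr rfl this] at hc1
      simp at hc1
    have h1 : 0 < |c a₀| ^ q := Real.rpow_pos_of_pos (abs_pos.mpr ha₀.ne') q
    have h2 : 0 < ∑ a, |c a| ^ q := by
      refine Finset.sum_pos' (fun a _ => Real.rpow_nonneg (abs_nonneg _) _) ⟨a₀, mem_univ _, h1⟩
    exact Real.rpow_pos_of_pos h2 _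
  have hsumc : ∑ a, c a * Q a = v + σ * N := by rw [hN] at hceq ⊢; linarith
  -- there is an action with Q a > v
  obtain ⟨astar, hastar⟩ : ∃ a, v < Q a := by
    by_contra h
    push_neg at h
    have h1 : ∑ a, c a * Q a ≤ ∑ a, c a * v :=
      Finset.sum_le_sum fun a _ => mul_le_mul_of_nonneg_left (h a) (hc0 a)
    rw [← Finset.sum_mul, hc1, one_mul, hsumc] at h1
    nlinarith [mul_pos hσ hNpos]
  have hua : 0 < u astar := by
    show (0:ℝ) < if v ≤ Q astar then Q astar - v else 0
    rw [if_pos hastar.le]; linarith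
  -- positivity of Z and Sp
  set Z : ℝ := ∑ a, w a with hZ
  have hZpos : 0 < Z := by
    refine Finset.sum_pos' (fun a _ => hw0 a) ⟨astar, mem_univ _, ?_⟩
    rw [hwu]; exact Real.rpow_pos_of_pos hua _
  set Sp : ℝ := ∑ a, u a ^ p with hSp
  have hSppos : 0 < Sp := by
    refine Finset.sum_pos' (fun a _ => Real.rpow_nonneg (hu0 a) _) ⟨astar, mem_univ _, ?_⟩
    exact Real.rpow_pos_of_pos hua _
  have hSpq : Sp ^ (1/p) * Sp ^ (1/q) = Sp := by
    rw [← Real.rpow_add hSppos, hdiv, Real.rpow_one]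
  -- Hölder direction: σ ≤ Sp ^ (1/p)
  have hσle : σ ≤ Sp ^ (1/p) := by
    have hcu : σ * N ≤ ∑ a, u a * c a := by
      have h1 : ∑ a, c a * (Q a - v) = σ * N := by
        have : ∑ a, c a * (Q a - v) = (∑ a, c a * Q a) - (∑ a, c a) * v := by
          rw [Finset.sum_mul, ← Finset.sum_sub_distrib]; exact Finset.sum_congr rfl fun a _ => mul_sub _ _ _
        rw [this, hc1, hsumc]; ring
      rw [← h1]
      refine Finset.sum_le_sum fun a _ => ?_
      rw [mul_comm (u a) (c a)]
      refine mul_le_mul_of_nonneg_left ?_ (hc0 a)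
      simp only [hu]; split_ifs with h
      · exact le_rfl
      · linarith [not_le.mp h]
    have hhold : ∑ a, u a * c a ≤ Sp ^ (1/p) * N := by
      have := Real.inner_le_Lp_mul_Lq_of_nonneg (Finset.univ (α := A)) hpq
        (fun a _ => hu0 a) (fun a _ => hc0 a)
      calc ∑ a, u a * c a ≤ (∑ a, u a ^ p) ^ (1/p) * (∑ a, c a ^ q) ^ (1/q) := this
        _ = Sp ^ (1/p) * N := by
            rw [hSp, hN]
            congr 2
            exact Finset.sum_congr rfl fun a _ => by rw [abs_of_nonneg (hc0 a)]
    have := hcu.trans hhold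
    exact le_of_mul_le_mul_right (by linarith) hNpos
  -- compute the norm and value for the candidate policy
  have hqZ : (Z:ℝ) ^ q ≠ 0 := (Real.rpow_pos_of_pos hZpos q).ne'
  have hnorm : (∑ a, |w a / Z| ^ q) ^ (1/q) = Sp ^ (1/q) / Z := by
    have h1 : ∀ a, |w a / Z| ^ q = u a ^ p / Z ^ q := by
      intro a
      rw [abs_of_nonneg (div_nonneg (hw0 a) hZpos.le),
        Real.div_rpow (hw0 a) hZpos.le, hwu, ← Real.rpow_mul (hu0 a),
        hpq.sub_one_mul_conj]
    have h2 : (∑ a, |w a / Z| ^ q) = Sp / Z ^ q := by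
      rw [Finset.sum_congr rfl fun a _ => h1 a, ← Finset.sum_div]
    rw [h2, Real.div_rpow hSppos.le (Real.rpow_nonneg hZpos.le q),
      ← Real.rpow_mul hZpos.le, mul_one_div_cancel hq0.ne', Real.rpow_one]
  have hval : ∑ a, (w a / Z) * Q a = Sp / Z + v := by
    have h1 : ∀ a, (w a / Z) * Q a = u a ^ p / Z + (w a / Z) * v := by
      intro a
      have hkey : w a * (Q a - v) = u a ^ p := by
        by_cases h : v ≤ Q a
        · have huu : u a = Q a - v := by simp [hu, h]
          rcases eq_or_lt_of_le (hu0 a) with h0 | h0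
          · rw [hwu, ← h0, Real.zero_rpow hpq.sub_one_ne_zero, Real.zero_rpow hp0.ne',
              zero_mul]
          · rw [hwu, ← huu]
            calc u a ^ (p - 1) * u a = u a ^ (p - 1) * u a ^ (1:ℝ) := by
                  rw [Real.rpow_one]
              _ = u a ^ (p - 1 + 1) := (Real.rpow_add h0 _ _).symm
              _ = u a ^ p := by norm_num
        · have hw0' : w a = 0 := by simp [hw, h]
          have hu0' : u a = 0 := by simp [hu, h]
          rw [hw0', hu0', Real.zero_rpow hp0.ne', zero_mul]
      have hkey' : w a * Q a - w a * v = u a ^ p := by rw [← hkey]; ring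
      field_simp
      linarith [hkey']
    rw [Finset.sum_congr rfl fun a _ => h1 a, Finset.sum_add_distrib, ← Finset.sum_div,
      ← Finset.sum_mul, ← Finset.sum_div, ← hZ, div_self hZpos.ne', one_mul]
  -- membership of candidate gives upper bound, hence σ ≥ Sp^(1/p)
  have hmem : -σ * (Sp ^ (1/q) / Z) + (Sp / Z + v) ∈ {z : ℝ | ∃ c : A → ℝ,
      (∀ a, 0 ≤ c a) ∧ (∑ a, c a = 1) ∧
      z = -σ * (∑ a, |c a| ^ q) ^ (1 / q) + ∑ a, c a * Q a} := by
    refine ⟨fun a => w a / Z, fun a => div_nonneg (hw0 a) hZpos.le, ?_, ?_⟩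
    · rw [← Finset.sum_div, ← hZ, div_self hZpos.ne']
    · rw [hnorm, hval]
  have hub := hfix.2 hmem
  have hσge : Sp ^ (1/p) ≤ σ := by
    have h1 : Sp / Z ≤ σ * (Sp ^ (1/q) / Z) := by linarith
    have h2 : Sp ≤ σ * Sp ^ (1/q) := by
      calc Sp = Sp / Z * Z := (div_mul_cancel₀ _ hZpos.ne').symm
        _ ≤ σ * (Sp ^ (1/q) / Z) * Z := mul_le_mul_of_nonneg_right h1 hZpos.le
        _ = σ * Sp ^ (1/q) := by field_simp
    exact le_of_mul_le_mul_right (by rw [hSpq]; exact h2)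
      (Real.rpow_pos_of_pos hSppos _)
  have hσeq : σ = Sp ^ (1/p) := le_antisymm hσle hσge
  refine ⟨hZpos, ?_⟩
  rw [hnorm, hval, hσeq]
  have : Sp ^ (1/p) * (Sp ^ (1/q) / Z) = Sp / Z := by
    rw [← mul_div_assoc, hSpq]
  rw [neg_mul, this]
  ring

/-- If `v*` is the optimal robust value function (fixed point of the
s-rectangular optimal robust Bellman operator) with `σ_s > 0` for all `s`, then
for each `s` the normalizer `Z_s = ∑_a (Q(s,a) - v*(s))^{p-1} 𝟙[Q(s,a) ≥ v*(s)]`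
is strictly positive, and the threshold policy
`π*(a|s) = (Q(s,a) - v*(s))^{p-1} 𝟙[Q(s,a) ≥ v*(s)] / Z_s` attains the maximum:
`-σ_s ‖π*(·|s)‖_q + ∑_a π*(a|s) Q(s,a) = v*(s)`. -/
theorem stmt7 (S A : Type*) [Fintype S] [Fintype A] [Nonempty S] [Nonempty A]
    (P₀ : S → A → S → ℝ) (hP₀pos : ∀ s a s', 0 ≤ P₀ s a s')
    (hP₀sum : ∀ s a, ∑ s', P₀ s a s' = 1)
    (R₀ : S → A → ℝ) (γ : ℝ) (hγ0 : 0 ≤ γ) (hγ1 : γ < 1)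
    (p q : ℝ) (hp : 1 < p) (hq : q = p / (p - 1))
    (α β : S → ℝ) (hα : ∀ s, 0 ≤ α s) (hβ : ∀ s, 0 ≤ β s)
    (vstar : S → ℝ)
    (Q : S → A → ℝ) (hQ : ∀ s a, Q s a = R₀ s a + γ * ∑ s', P₀ s a s' * vstar s')
    (σ : S → ℝ)
    (hσdef : ∀ s, σ s = α s + γ * β s * (⨅ ω : ℝ, (∑ s', |vstar s' - ω| ^ q) ^ (1 / q)))
    (hσpos : ∀ s, 0 < σ s)
    (hfix : ∀ s, IsGreatest {z : ℝ | ∃ c : A → ℝ, (∀ a, 0 ≤ c a) ∧ (∑ a, c a = 1) ∧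
        z = -(σ s) * (∑ a, |c a| ^ q) ^ (1 / q) + ∑ a, c a * Q s a} (vstar s)) :
    ∀ s : S,
      0 < (∑ a, if vstar s ≤ Q s a then (Q s a - vstar s) ^ (p - 1) else 0) ∧
      -(σ s) * (∑ a, |(if vstar s ≤ Q s a then (Q s a - vstar s) ^ (p - 1) else 0) /
            (∑ a', if vstar s ≤ Q s a' then (Q s a' - vstar s) ^ (p - 1) else 0)| ^ q) ^ (1 / q)
        + ∑ a, ((if vstar s ≤ Q s a then (Q s a - vstar s) ^ (p - 1) else 0) /
            (∑ a', if vstar s ≤ Q s a' then (Q s a' - vstar s) ^ (p - 1) else 0)) * Q s a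
        = vstar s := by
  intro s
  exact aux_stmt7 p q (σ s) (vstar s) hp hq (hσpos s) (Q s)
    (fun a => if vstar s ≤ Q s a then (Q s a - vstar s) ^ (p - 1) else 0)
    (fun a => rfl) (hfix s)
end

section
/- The value ζ_p := max_{c ∈ Δ_A} ( −α ‖c‖_q + ⟨c, b⟩ ) satisfies the equation ∑_{i : b_i ≥ ζ_p} (b_i − ζ_p)^p = α^p. -/
/-- The value `ζ_p = max_{c ∈ Δ_A} (-α ‖c‖_q + ⟨c, b⟩)` satisfies
`∑_{i : b_i ≥ ζ_p} (b_i - ζ_p)^p = α^p`. -/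
theorem stmt9 (A : ℕ) [NeZero A] (b : Fin A → ℝ)
    (hb : ∀ i j : Fin A, i ≤ j → b j ≤ b i)
    (α : ℝ) (hα : 0 < α) (p q : ℝ) (hp : 1 < p) (hq : q = p / (p - 1))
    (ζ : ℝ)
    (hζ : IsGreatest {y : ℝ | ∃ c : Fin A → ℝ, (∀ i, 0 ≤ c i) ∧ (∑ i, c i = 1) ∧
        y = -α * (∑ i, |c i| ^ q) ^ (1 / q) + ∑ i, c i * b i} ζ) :
    (∑ i, if ζ ≤ b i then (b i - ζ) ^ p else 0) = α ^ p := by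
  have hpq : p.HolderConjugate q := by
    rw [hq]; exact Real.HolderConjugate.conjExponent hp
  have hp0 : (0:ℝ) < p := hpq.pos
  have hq0 : (0:ℝ) < q := hpq.symm.pos
  set d : Fin A → ℝ := fun i => max (b i - ζ) 0 with hd
  have hd0 : ∀ i, 0 ≤ d i := fun i => le_max_right _ _
  set G : ℝ := ∑ i, d i ^ p with hGdef
  have hG0 : 0 ≤ G := Finset.sum_nonneg fun i _ => Real.rpow_nonneg (hd0 i) p
  have hgoal : (∑ i, if ζ ≤ b i then (b i - ζ) ^ p else 0) = G := by
    apply Finset.sum_congr rfl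
    intro i _
    by_cases h : ζ ≤ b i
    · simp only [h, if_true, hd, max_eq_left (by linarith : (0:ℝ) ≤ b i - ζ)]
    · simp only [h, if_false, hd, max_eq_right (by linarith : b i - ζ ≤ 0),
        Real.zero_rpow hp0.ne']
  rw [hgoal]
  -- Step B : α^p ≤ G
  obtain ⟨c, hc0, hc1, hcζ⟩ := hζ.1
  set N : ℝ := (∑ i, |c i| ^ q) ^ (1 / q) with hN
  have hNpos : 0 < N := by
    have hex : ∃ i, c i ≠ 0 := by
      by_contra h
      push_neg at h
      simp [h] at hc1
    obtain ⟨i, hi⟩ := hex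
    have : 0 < ∑ j, |c j| ^ q := by
      apply Finset.sum_pos' (fun j _ => Real.rpow_nonneg (abs_nonneg _) q)
      exact ⟨i, Finset.mem_univ i, Real.rpow_pos_of_pos (abs_pos.2 hi) q⟩
    exact Real.rpow_pos_of_pos this _
  have hαN : α * N = ∑ i, c i * (b i - ζ) := by
    have h1 : ∑ i, c i * (b i - ζ) = (∑ i, c i * b i) - ζ := by
      simp only [mul_sub]
      rw [Finset.sum_sub_distrib, ← Finset.sum_mul, hc1, one_mul]
    rw [h1]
    linarith [hcζ]
  have hB : α ≤ G ^ (1/p) := by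
    have h2 : α * N ≤ G ^ (1/p) * N := by
      rw [hαN]
      calc ∑ i, c i * (b i - ζ) ≤ ∑ i, d i * c i := by
            apply Finset.sum_le_sum
            intro i _
            calc c i * (b i - ζ) ≤ c i * d i :=
                  mul_le_mul_of_nonneg_left (le_max_left _ _) (hc0 i)
              _ = d i * c i := mul_comm _ _
        _ ≤ (∑ i, |d i| ^ p) ^ (1/p) * (∑ i, |c i| ^ q) ^ (1/q) :=
            Real.inner_le_Lp_mul_Lq Finset.univ d c hpq
        _ = G ^ (1/p) * N := by
            rw [hN, hGdef]
            congr 2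
            exact Finset.sum_congr rfl fun i _ => by rw [abs_of_nonneg (hd0 i)]
    exact le_of_mul_le_mul_right h2 hNpos
  have hBp : α ^ p ≤ G := by
    calc α ^ p ≤ (G ^ (1/p)) ^ p := Real.rpow_le_rpow hα.le hB hp0.le
      _ = G ^ ((1/p)*p) := (Real.rpow_mul hG0 _ _).symm
      _ = G := by rw [one_div_mul_cancel hp0.ne', Real.rpow_one]
  -- Step C : G ≤ α^p, by contradiction
  by_contra hne
  have hGgt : α ^ p < G := hBp.lt_of_ne fun h => hne h.symm
  have hGpos : 0 < G := lt_of_lt_of_le (Real.rpow_pos_of_pos hα p) hBp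
  have hα' : α < G ^ (1/p) := by
    have h1 : α = (α ^ p) ^ (1/p) := by
      rw [← Real.rpow_mul hα.le, mul_one_div_cancel hp0.ne', Real.rpow_one]
    rw [h1]
    exact Real.rpow_lt_rpow (Real.rpow_nonneg hα.le p) hGgt (by positivity)
  have hex : ∃ i, 0 < d i := by
    by_contra h
    push_neg at h
    have hz : ∀ i, d i = 0 := fun i => le_antisymm (h i) (hd0 i)
    have : G = 0 := by
      rw [hGdef]
      exact Finset.sum_eq_zero fun i _ => by rw [hz i, Real.zero_rpow hp0.ne']
    linarith
  obtain ⟨i0, hi0⟩ := hex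
  set S : ℝ := ∑ i, d i ^ (p-1) with hS
  have hSpos : 0 < S :=
    Finset.sum_pos' (fun j _ => Real.rpow_nonneg (hd0 j) _)
      ⟨i0, Finset.mem_univ _, Real.rpow_pos_of_pos hi0 _⟩
  set c' : Fin A → ℝ := fun i => d i ^ (p-1) / S with hc'
  have hc'0 : ∀ i, 0 ≤ c' i := fun i => div_nonneg (Real.rpow_nonneg (hd0 i) _) hSpos.le
  have hc'1 : ∑ i, c' i = 1 := by
    rw [hc']
    simp only
    rw [← Finset.sum_div, ← hS, div_self hSpos.ne']
  have hnorm : (∑ i, |c' i| ^ q) ^ (1/q) = G ^ (1/q) / S := by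
    have h1 : ∑ i, |c' i| ^ q = G / S ^ q := by
      rw [hGdef, Finset.sum_div]
      apply Finset.sum_congr rfl
      intro i _
      rw [abs_of_nonneg (hc'0 i), hc', Real.div_rpow (Real.rpow_nonneg (hd0 i) _) hSpos.le,
        ← Real.rpow_mul (hd0 i), hpq.sub_one_mul_conj]
    rw [h1, Real.div_rpow hG0 (Real.rpow_nonneg hSpos.le q), ← Real.rpow_mul hSpos.le,
      mul_one_div_cancel hq0.ne', Real.rpow_one]
  have hdot : ∑ i, c' i * b i = G / S + ζ := by
    have h1 : ∀ i, d i ^ (p-1) * (b i - ζ) = d i ^ p := by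
      intro i
      by_cases h : 0 < b i - ζ
      · have hdi : d i = b i - ζ := max_eq_left h.le
        rw [hdi]
        calc (b i - ζ) ^ (p-1) * (b i - ζ)
            = (b i - ζ) ^ (p-1) * (b i - ζ) ^ (1:ℝ) := by rw [Real.rpow_one]
          _ = (b i - ζ) ^ (p-1+1) := (Real.rpow_add h _ _).symm
          _ = (b i - ζ) ^ p := by ring_nf
      · have hdi : d i = 0 := max_eq_right (not_lt.1 h)
        rw [hdi, Real.zero_rpow hpq.sub_one_ne_zero, Real.zero_rpow hp0.ne', zero_mul]
    have h2 : ∑ i, c' i * b i = (∑ i, c' i * (b i - ζ)) + ζ := by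
      have : ∀ i, c' i * b i = c' i * (b i - ζ) + c' i * ζ := fun i => by ring
      simp only [this]
      rw [Finset.sum_add_distrib, ← Finset.sum_mul, hc'1, one_mul]
    rw [h2]
    congr 1
    rw [hGdef, Finset.sum_div]
    apply Finset.sum_congr rfl
    intro i _
    rw [hc']
    simp only
    rw [div_mul_eq_mul_div, h1 i]
  have hmem : -α * (∑ i, |c' i| ^ q) ^ (1/q) + ∑ i, c' i * b i ≤ ζ :=
    hζ.2 ⟨c', hc'0, hc'1, rfl⟩
  rw [hnorm, hdot] at hmem
  -- so G/S ≤ α * G^(1/q) / S, i.e. G ≤ α * G^(1/q)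
  have h3 : G ≤ α * G ^ (1/q) := by
    have h3' : G / S ≤ α * G ^ (1/q) / S := by rw [mul_div_assoc]; linarith
    calc G = G / S * S := (div_mul_cancel₀ _ hSpos.ne').symm
      _ ≤ α * G ^ (1/q) / S * S := mul_le_mul_of_nonneg_right h3' hSpos.le
      _ = α * G ^ (1/q) := div_mul_cancel₀ _ hSpos.ne'
  have h4 : G = G ^ (1/p) * G ^ (1/q) := by
    rw [← Real.rpow_add hGpos, one_div, one_div, hpq.inv_add_inv_eq_one, Real.rpow_one]
  have h3b : G ^ (1/p) * G ^ (1/q) ≤ α * G ^ (1/q) := by rw [← h4]; exact h3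
  have h5 : G ^ (1/p) ≤ α :=
    le_of_mul_le_mul_right h3b (Real.rpow_pos_of_pos hGpos _)
  linarith
end

section
/- Let ζ_p := max_{c ∈ Δ_A} ( −α ‖c‖_q + ⟨c, b⟩ ). Then the normalizer Z := ∑_{i=1}^{A} (b_i − ζ_p)^{p−1} 𝟙[b_i ≥ ζ_p] is strictly positive, and the vector c* ∈ Δ_A defined by c*_i := (b_i − ζ_p)^{p−1} 𝟙[b_i ≥ ζ_p] / Z is a maximizer: −α ‖c*‖_q + ⟨c*, b⟩ = ζ_p. -/
theorem stmt10_aux (A : ℕ) [NeZero A] (b : Fin A → ℝ)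
    (α : ℝ) (hα : 0 < α) (p q : ℝ) (hp : 1 < p) (hq : q = p / (p - 1))
    (ζ : ℝ)
    (hζ : IsGreatest {y : ℝ | ∃ c : Fin A → ℝ, (∀ i, 0 ≤ c i) ∧ (∑ i, c i = 1) ∧
        y = -α * (∑ i, |c i| ^ q) ^ (1 / q) + ∑ i, c i * b i} ζ)
    (d : Fin A → ℝ)
    (hd : ∀ i, d i = if ζ ≤ b i then (b i - ζ) ^ (p - 1) else 0) :
    0 < (∑ i, d i) ∧ (∀ i : Fin A, 0 ≤ d i / ∑ j, d j) ∧
    (∑ i, d i / ∑ j, d j) = 1 ∧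
    -α * (∑ i, |d i / ∑ j, d j| ^ q) ^ (1 / q) + ∑ i, (d i / ∑ j, d j) * b i = ζ := by
  obtain ⟨⟨c, hc0, hc1, hcy⟩, hub⟩ := hζ
  have hp0 : (0:ℝ) < p := one_pos.trans hp
  have hp1 : (0:ℝ) < p - 1 := sub_pos.mpr hp
  have hq1 : (1:ℝ) < q := by rw [hq, lt_div_iff₀ hp1]; linarith
  have hq0 : (0:ℝ) < q := one_pos.trans hq1
  have hpq : (p - 1) * q = p := by rw [hq]; field_simp
  have hconj : Real.HolderConjugate p q := (Real.holderConjugate_iff_eq_conjExponent hp).mpr hq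
  have hinv : 1 / p + 1 / q = 1 := by
    have := hconj.inv_add_inv_eq_one; simpa [one_div] using this
  have hd0 : ∀ i, 0 ≤ d i := by
    intro i; rw [hd]; split
    · exact Real.rpow_nonneg (by linarith) _
    · exact le_rfl
  have hcpos : 0 < (∑ i, |c i| ^ q) ^ (1 / q) := by
    apply Real.rpow_pos_of_pos
    have hex : ∃ i, 0 < c i := by
      by_contra h
      push_neg at h
      have h0 : ∑ i, c i = 0 :=
        Finset.sum_eq_zero fun i _ => le_antisymm (h i) (hc0 i)
      rw [hc1] at h0; norm_num at h0
    obtain ⟨i, hi⟩ := hex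
    exact Finset.sum_pos' (fun j _ => Real.rpow_nonneg (abs_nonneg _) _)
      ⟨i, Finset.mem_univ i, Real.rpow_pos_of_pos (abs_pos.mpr hi.ne') _⟩
  have hex : ∃ i, ζ < b i := by
    by_contra h
    push_neg at h
    have hsum : ∑ i, c i * b i ≤ ζ := by
      calc ∑ i, c i * b i ≤ ∑ i, c i * ζ :=
            Finset.sum_le_sum fun i _ => mul_le_mul_of_nonneg_left (h i) (hc0 i)
        _ = ζ := by rw [← Finset.sum_mul, hc1, one_mul]
    have hlt : ζ < ζ := by
      calc ζ = -α * (∑ i, |c i| ^ q) ^ (1/q) + ∑ i, c i * b i := hcy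
        _ < 0 + ζ := by
            apply add_lt_add_of_lt_of_le _ hsum
            nlinarith
        _ = ζ := zero_add ζ
    exact lt_irrefl _ hlt
  obtain ⟨i0, hi0⟩ := hex
  have hZpos : 0 < ∑ j, d j := by
    apply Finset.sum_pos' (fun j _ => hd0 j)
    refine ⟨i0, Finset.mem_univ _, ?_⟩
    rw [hd, if_pos hi0.le]
    exact Real.rpow_pos_of_pos (sub_pos.mpr hi0) _
  set S : ℝ := ∑ i, if ζ ≤ b i then (b i - ζ) ^ p else 0 with hSdef
  have hS0 : 0 ≤ S := Finset.sum_nonneg fun i _ => by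
    split
    · exact Real.rpow_nonneg (by linarith) _
    · exact le_rfl
  -- lower bound: α ≤ S ^ (1/p) via Hölder applied to the achiever c
  have hach : ∑ i, c i * (b i - ζ) = α * (∑ i, |c i| ^ q) ^ (1/q) := by
    have h1 : ∑ i, c i * (b i - ζ) = (∑ i, c i * b i) - ζ := by
      rw [Finset.sum_congr rfl fun i _ => (by ring : c i * (b i - ζ) = c i * b i - c i * ζ),
        Finset.sum_sub_distrib, ← Finset.sum_mul, hc1, one_mul]
    rw [h1]; linarith [hcy]
  have hlow : α ≤ S ^ (1/p) := by
    have hH : ∑ i, (fun i => if ζ ≤ b i then b i - ζ else 0) i * c i ≤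
        (∑ i, |(fun i => if ζ ≤ b i then b i - ζ else 0) i| ^ p) ^ (1/p) *
        (∑ i, |c i| ^ q) ^ (1/q) :=
      Real.inner_le_Lp_mul_Lq Finset.univ _ c hconj
    simp only at hH
    have h2 : ∑ i, c i * (b i - ζ) ≤ ∑ i, (if ζ ≤ b i then b i - ζ else 0) * c i := by
      apply Finset.sum_le_sum
      intro i _
      by_cases h : ζ ≤ b i
      · rw [if_pos h, mul_comm]
      · rw [if_neg h, zero_mul]
        exact mul_nonpos_of_nonneg_of_nonpos (hc0 i) (by linarith)
    have h3 : ∑ i, |if ζ ≤ b i then b i - ζ else 0| ^ p = S := by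
      apply Finset.sum_congr rfl
      intro i _
      by_cases h : ζ ≤ b i
      · rw [if_pos h, if_pos h, abs_of_nonneg (by linarith)]
      · rw [if_neg h, if_neg h, abs_zero, Real.zero_rpow hp0.ne']
    rw [h3] at hH
    have h4 : α * (∑ i, |c i| ^ q) ^ (1/q) ≤ S ^ (1/p) * (∑ i, |c i| ^ q) ^ (1/q) := by
      rw [← hach]; exact le_trans h2 hH
    exact le_of_mul_le_mul_right h4 hcpos
  have hSpos : 0 < S := by
    rcases eq_or_lt_of_le hS0 with h | h
    · rw [← h, Real.zero_rpow (by positivity : (1:ℝ)/p ≠ 0)] at hlow; linarith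
    · exact h
  -- computations about the candidate maximizer
  have hsum_q : ∑ i, |d i / ∑ j, d j| ^ q = S / (∑ j, d j) ^ q := by
    rw [hSdef, Finset.sum_div]
    apply Finset.sum_congr rfl
    intro i _
    rw [abs_of_nonneg (div_nonneg (hd0 i) hZpos.le),
      Real.div_rpow (hd0 i) hZpos.le]
    congr 1
    rw [hd]
    by_cases h : ζ ≤ b i
    · rw [if_pos h, if_pos h, ← Real.rpow_mul (by linarith), hpq]
    · rw [if_neg h, if_neg h, Real.zero_rpow hq0.ne']
  have hZq : (S / (∑ j, d j) ^ q) ^ (1/q) = S ^ (1/q) / ∑ j, d j := by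
    rw [Real.div_rpow hS0 (Real.rpow_nonneg hZpos.le _)]
    congr 1
    rw [← Real.rpow_mul hZpos.le, mul_one_div, div_self hq0.ne', Real.rpow_one]
  have hdb : ∀ i, d i * b i = (if ζ ≤ b i then (b i - ζ) ^ p else 0) + ζ * d i := by
    intro i
    rw [hd]
    by_cases h : ζ ≤ b i
    · rw [if_pos h, if_pos h]
      rcases eq_or_lt_of_le (sub_nonneg.mpr h) with hx0 | hx0
      · have hbi : b i = ζ := by linarith
        rw [hbi, sub_self, Real.zero_rpow hp1.ne', Real.zero_rpow hp0.ne']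
        ring
      · have hpe : (b i - ζ) ^ (p - 1) * (b i - ζ) = (b i - ζ) ^ p := by
          rw [← Real.rpow_add_one hx0.ne', sub_add_cancel]
        rw [← hpe]; ring
    · rw [if_neg h, if_neg h]; ring
  have hsum_db : ∑ i, (d i / ∑ j, d j) * b i = (S + ζ * ∑ j, d j) / ∑ j, d j := by
    have h1 : ∀ i, (d i / ∑ j, d j) * b i = (d i * b i) / ∑ j, d j := fun i => by ring
    rw [Finset.sum_congr rfl fun i _ => h1 i, ← Finset.sum_div]
    congr 1
    rw [Finset.sum_congr rfl fun i _ => hdb i, Finset.sum_add_distrib, ← Finset.mul_sum, hSdef]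
  -- upper bound: S ≤ α * S ^ (1/q) from optimality
  have hup : -α * (∑ i, |d i / ∑ j, d j| ^ q) ^ (1/q)
      + ∑ i, (d i / ∑ j, d j) * b i ≤ ζ := by
    apply hub
    exact ⟨fun i => d i / ∑ j, d j, fun i => div_nonneg (hd0 i) hZpos.le,
      by rw [← Finset.sum_div, div_self hZpos.ne'], rfl⟩
  rw [hsum_q, hZq, hsum_db] at hup
  have hkey : S ≤ α * S ^ (1/q) := by
    have h' : (-α * (S ^ (1/q) / ∑ j, d j) + (S + ζ * ∑ j, d j) / ∑ j, d j) * (∑ j, d j)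
        ≤ ζ * ∑ j, d j := mul_le_mul_of_nonneg_right hup hZpos.le
    have h2 : (-α * (S ^ (1/q) / ∑ j, d j) + (S + ζ * ∑ j, d j) / ∑ j, d j) * (∑ j, d j)
        = -α * S ^ (1/q) + (S + ζ * ∑ j, d j) := by
      field_simp
    rw [h2] at h'
    linarith
  have hsplit : S = S ^ (1/p) * S ^ (1/q) := by
    rw [← Real.rpow_add hSpos, hinv, Real.rpow_one]
  have hSq_pos : 0 < S ^ (1/q) := Real.rpow_pos_of_pos hSpos _
  have hupper : S ^ (1/p) ≤ α := by
    have h4 : S ^ (1/p) * S ^ (1/q) ≤ α * S ^ (1/q) := by rw [← hsplit]; exact hkey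
    exact le_of_mul_le_mul_right h4 hSq_pos
  have hαS : α * S ^ (1/q) = S := by
    rw [le_antisymm hlow hupper]; exact hsplit.symm
  refine ⟨hZpos, fun i => div_nonneg (hd0 i) hZpos.le,
    by rw [← Finset.sum_div, div_self hZpos.ne'], ?_⟩
  rw [hsum_q, hZq, hsum_db]
  have h5 : -α * (S ^ (1/q) / ∑ j, d j) + (S + ζ * ∑ j, d j) / ∑ j, d j
      = (-(α * S ^ (1/q)) + S + ζ * ∑ j, d j) / ∑ j, d j := by ring
  rw [h5, hαS]
  rw [show -S + S + ζ * ∑ j, d j = ζ * ∑ j, d j by ring]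
  rw [mul_div_assoc, div_self hZpos.ne', mul_one]

/-- With `ζ_p = max_{c ∈ Δ_A} (-α ‖c‖_q + ⟨c, b⟩)`, the normalizer
`Z = ∑_i (b_i - ζ_p)^{p-1} 𝟙[b_i ≥ ζ_p]` is strictly positive, and
`c*_i = (b_i - ζ_p)^{p-1} 𝟙[b_i ≥ ζ_p] / Z` lies in `Δ_A` and is a maximizer:
`-α ‖c*‖_q + ⟨c*, b⟩ = ζ_p`. -/
theorem stmt10 (A : ℕ) [NeZero A] (b : Fin A → ℝ)
    (hb : ∀ i j : Fin A, i ≤ j → b j ≤ b i)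
    (α : ℝ) (hα : 0 < α) (p q : ℝ) (hp : 1 < p) (hq : q = p / (p - 1))
    (ζ : ℝ)
    (hζ : IsGreatest {y : ℝ | ∃ c : Fin A → ℝ, (∀ i, 0 ≤ c i) ∧ (∑ i, c i = 1) ∧
        y = -α * (∑ i, |c i| ^ q) ^ (1 / q) + ∑ i, c i * b i} ζ) :
    0 < (∑ i, if ζ ≤ b i then (b i - ζ) ^ (p - 1) else 0) ∧
    (∀ i : Fin A, 0 ≤ (if ζ ≤ b i then (b i - ζ) ^ (p - 1) else 0) /
        (∑ j, if ζ ≤ b j then (b j - ζ) ^ (p - 1) else 0)) ∧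
    (∑ i, (if ζ ≤ b i then (b i - ζ) ^ (p - 1) else 0) /
        (∑ j, if ζ ≤ b j then (b j - ζ) ^ (p - 1) else 0)) = 1 ∧
    -α * (∑ i, |(if ζ ≤ b i then (b i - ζ) ^ (p - 1) else 0) /
          (∑ j, if ζ ≤ b j then (b j - ζ) ^ (p - 1) else 0)| ^ q) ^ (1 / q)
      + ∑ i, ((if ζ ≤ b i then (b i - ζ) ^ (p - 1) else 0) /
          (∑ j, if ζ ≤ b j then (b j - ζ) ^ (p - 1) else 0)) * b i = ζ := by
  exact stmt10_aux A b α hα p q hp hq ζ hζ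
    (fun i => if ζ ≤ b i then (b i - ζ) ^ (p - 1) else 0) (fun i => rfl)
end

section
/- Let ζ_p := max_{c ∈ Δ_A} ( −α ‖c‖_q + ⟨c, b⟩ ) and χ_p := max{ i ∈ {1,…,A} : b_i ≥ ζ_p } (this set is nonempty since b_1 ≥ ζ_p). Then for every k ∈ {1,…,A}: k ≤ χ_p if and only if ∑_{i=1}^{k} (b_i − b_k)^p ≤ α^p. -/
/-- With `ζ_p = max_{c ∈ Δ_A} (-α ‖c‖_q + ⟨c, b⟩)` and
`χ_p = max {i : b_i ≥ ζ_p}` (greatest such index), for every `k`: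
`k ≤ χ_p ↔ ∑_{i=1}^k (b_i - b_k)^p ≤ α^p` (0-based: sum over `i ≤ k`). -/
theorem stmt11 (A : ℕ) [NeZero A] (b : Fin A → ℝ)
    (hb : ∀ i j : Fin A, i ≤ j → b j ≤ b i)
    (α : ℝ) (hα : 0 < α) (p q : ℝ) (hp : 1 < p) (hq : q = p / (p - 1))
    (ζ : ℝ)
    (hζ : IsGreatest {y : ℝ | ∃ c : Fin A → ℝ, (∀ i, 0 ≤ c i) ∧ (∑ i, c i = 1) ∧
        y = -α * (∑ i, |c i| ^ q) ^ (1 / q) + ∑ i, c i * b i} ζ)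
    (χ : Fin A) (hχ : IsGreatest {i : Fin A | ζ ≤ b i} χ) :
    ∀ k : Fin A, k ≤ χ ↔
      (∑ i ∈ Finset.univ.filter (fun i : Fin A => i ≤ k), (b i - b k) ^ p) ≤ α ^ p := by
  have hp0 : (0:ℝ) < p := by linarith
  have hp1 : p - 1 ≠ 0 := by intro h; linarith [sub_eq_zero.mp h]
  have hq0 : 0 < q := by rw [hq]; exact div_pos hp0 (by linarith)
  have hq_ne : q ≠ 0 := ne_of_gt hq0
  have hpqc : Real.HolderConjugate p q := (Real.holderConjugate_iff_eq_conjExponent hp).2 hq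
  have hone : 1 / p + 1 / q = 1 := by
    rw [one_div, one_div]; exact hpqc.inv_add_inv_eq_one
  have hpm : (p - 1) * q = p := by rw [hq]; field_simp
  intro k
  set s := Finset.univ.filter (fun i : Fin A => i ≤ k) with hsdef
  have hmem : ∀ i : Fin A, i ∈ s ↔ i ≤ k := by intro i; simp [hsdef]
  set S := ∑ i ∈ s, (b i - b k) ^ p with hSdef
  have hnn : ∀ i ∈ s, 0 ≤ b i - b k := fun i hi => sub_nonneg.2 (hb i k ((hmem i).1 hi))
  have Snn : 0 ≤ S := Finset.sum_nonneg fun i hi => Real.rpow_nonneg (hnn i hi) p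
  have key : k ≤ χ ↔ ζ ≤ b k := by
    constructor
    · intro h; exact le_trans hχ.1 (hb k χ h)
    · intro h; exact hχ.2 h
  rw [key]
  constructor
  · -- ζ ≤ b k → S ≤ α ^ p
    intro hzk
    by_contra hS
    push_neg at hS
    -- build the witness c
    have hα_p : 0 < α ^ p := Real.rpow_pos_of_pos hα p
    have hSpos : 0 < S := lt_trans hα_p hS
    have hex : ∃ i ∈ s, 0 < (b i - b k) ^ p := by
      by_contra h
      push_neg at h
      have : S ≤ 0 := Finset.sum_nonpos h
      linarith
    obtain ⟨i0, hi0s, hi0⟩ := hex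
    have hbi0 : 0 < b i0 - b k := by
      rcases lt_or_eq_of_le (hnn i0 hi0s) with h | h
      · exact h
      · exfalso; rw [← h, Real.zero_rpow (ne_of_gt hp0)] at hi0; exact lt_irrefl 0 hi0
    set T := ∑ i ∈ s, (b i - b k) ^ (p - 1) with hTdef
    have hTpos : 0 < T :=
      Finset.sum_pos' (fun i hi => Real.rpow_nonneg (hnn i hi) _)
        ⟨i0, hi0s, Real.rpow_pos_of_pos hbi0 _⟩
    set c : Fin A → ℝ := fun i => if i ≤ k then (b i - b k) ^ (p - 1) / T else 0 with hcdef
    have hc0 : ∀ i, 0 ≤ c i := by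
      intro i
      rw [hcdef]
      dsimp only
      split
      · rename_i h
        exact div_nonneg (Real.rpow_nonneg (sub_nonneg.2 (hb i k h)) _) hTpos.le
      · exact le_refl 0
    have hsum : ∑ i, c i = 1 := by
      have : ∑ i, c i = ∑ i ∈ s, (b i - b k) ^ (p - 1) / T := by
        rw [hsdef]
        exact (Finset.sum_filter (fun i : Fin A => i ≤ k)
          (fun i => (b i - b k) ^ (p - 1) / T)).symm
      rw [this, ← Finset.sum_div, ← hTdef, div_self (ne_of_gt hTpos)]
    have habs : ∀ i, |c i| = c i := fun i => abs_of_nonneg (hc0 i)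
    have hnorm : ∑ i, |c i| ^ q = S / T ^ q := by
      simp only [habs]
      have step1 : ∑ i, c i ^ q = ∑ i ∈ s, ((b i - b k) ^ (p - 1) / T) ^ q := by
        have : ∀ i : Fin A, c i ^ q =
            if i ≤ k then ((b i - b k) ^ (p - 1) / T) ^ q else 0 := by
          intro i
          rw [hcdef]
          dsimp only
          split
          · rfl
          · exact Real.zero_rpow hq_ne
        rw [Finset.sum_congr rfl fun i _ => this i, hsdef]
        exact (Finset.sum_filter (fun i : Fin A => i ≤ k) _).symm
      rw [step1]
      have step2 : ∀ i ∈ s, ((b i - b k) ^ (p - 1) / T) ^ q = (b i - b k) ^ p / T ^ q := by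
        intro i hi
        rw [Real.div_rpow (Real.rpow_nonneg (hnn i hi) _) hTpos.le,
          ← Real.rpow_mul (hnn i hi), hpm]
      rw [Finset.sum_congr rfl step2, ← Finset.sum_div, ← hSdef]
    have hnormr : (∑ i, |c i| ^ q) ^ (1 / q) = S ^ (1/q) / T := by
      rw [hnorm, Real.div_rpow Snn (by positivity : (0:ℝ) ≤ T ^ q),
        ← Real.rpow_mul hTpos.le, mul_one_div, div_self hq_ne, Real.rpow_one]
    have hdot : ∑ i, c i * b i = b k + S / T := by
      have h1 : ∑ i, c i * (b i - b k) = S / T := by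
        have e0 : ∑ i, c i * (b i - b k) =
            ∑ i ∈ s, (b i - b k) ^ (p - 1) / T * (b i - b k) := by
          have : ∀ i : Fin A, c i * (b i - b k) =
              if i ≤ k then (b i - b k) ^ (p - 1) / T * (b i - b k) else 0 := by
            intro i
            rw [hcdef]
            dsimp only
            split
            · rfl
            · ring
          rw [Finset.sum_congr rfl fun i _ => this i, hsdef]
          exact (Finset.sum_filter (fun i : Fin A => i ≤ k) _).symm
        rw [e0]
        have e1 : ∀ i ∈ s, (b i - b k) ^ (p - 1) / T * (b i - b k)
            = (b i - b k) ^ p / T := by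
          intro i hi
          have hx : (b i - b k) ^ (p - 1) * (b i - b k) = (b i - b k) ^ p := by
            rcases eq_or_lt_of_le (hnn i hi) with h | h
            · rw [← h, Real.zero_rpow (ne_of_gt hp0), mul_zero]
            · rw [← Real.rpow_add_one (ne_of_gt h), sub_add_cancel]
          rw [div_mul_eq_mul_div, hx]
        rw [Finset.sum_congr rfl e1, ← Finset.sum_div, ← hSdef]
      have expand : ∑ i, c i * b i = (∑ i, c i * (b i - b k)) + (∑ i, c i) * b k := by
        rw [Finset.sum_mul, ← Finset.sum_add_distrib]
        exact Finset.sum_congr rfl fun i _ => by ring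
      rw [expand, h1, hsum, one_mul]; ring
    have hmemζ : -α * (S ^ (1/q) / T) + (b k + S / T) ≤ ζ := by
      apply hζ.2
      exact ⟨c, hc0, hsum, by rw [hnormr, hdot]⟩
    -- show b k < that value
    have hsplit : S = S ^ (1/p) * S ^ (1/q) := by
      rw [← Real.rpow_add hSpos, hone, Real.rpow_one]
    have hαlt : α < S ^ (1/p) := by
      have h1 : (α ^ p) ^ (1/p) < S ^ (1/p) :=
        Real.rpow_lt_rpow (le_of_lt hα_p) hS (by positivity)
      rwa [← Real.rpow_mul hα.le, mul_one_div, div_self (ne_of_gt hp0),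
        Real.rpow_one] at h1
    have hSq : 0 < S ^ (1/q) := Real.rpow_pos_of_pos hSpos _
    have hlt : α * S ^ (1/q) < S := by
      calc α * S ^ (1/q) < S ^ (1/p) * S ^ (1/q) :=
            mul_lt_mul_of_pos_right hαlt hSq
        _ = S := hsplit.symm
    have hdivpos : 0 < (S - α * S ^ (1/q)) / T := div_pos (by linarith) hTpos
    have hring : -α * (S ^ (1/q) / T) + (b k + S / T)
        = b k + (S - α * S ^ (1/q)) / T := by ring
    linarith [hmemζ, hring ▸ hmemζ]
  · -- S ≤ α ^ p → ζ ≤ b k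
    intro hS
    obtain ⟨c, hc0, hc1, hcy⟩ := hζ.1
    rw [hcy]
    set N := (∑ i, |c i| ^ q) ^ (1 / q) with hN
    have hNnn : 0 ≤ N := Real.rpow_nonneg (Finset.sum_nonneg fun i _ => by positivity) _
    have h1 : ∑ i, c i * (b i - b k) = (∑ i, c i * b i) - b k := by
      have : ∑ i, c i * (b i - b k) = (∑ i, c i * b i) - (∑ i, c i) * b k := by
        rw [Finset.sum_mul, ← Finset.sum_sub_distrib]
        exact Finset.sum_congr rfl fun i _ => by ring
      rw [this, hc1, one_mul]
    have h2 : ∑ i, c i * (b i - b k) ≤ ∑ i ∈ s, c i * (b i - b k) := by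
      have hsplit := Finset.sum_filter_add_sum_filter_not Finset.univ
        (fun i : Fin A => i ≤ k) (fun i => c i * (b i - b k))
      have hneg : ∑ i ∈ Finset.univ.filter (fun i : Fin A => ¬ i ≤ k),
          c i * (b i - b k) ≤ 0 := by
        apply Finset.sum_nonpos
        intro i hi
        have hik : k ≤ i := le_of_not_ge (Finset.mem_filter.mp hi).2
        exact mul_nonpos_of_nonneg_of_nonpos (hc0 i) (sub_nonpos.2 (hb k i hik))
      rw [← hsplit]
      linarith
    have holder := Real.inner_le_Lp_mul_Lq s (fun i => b i - b k) c hpqc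
    have e1 : ∑ i ∈ s, |b i - b k| ^ p = S :=
      Finset.sum_congr rfl fun i hi => by rw [abs_of_nonneg (hnn i hi)]
    have e2 : S ^ (1/p) ≤ α := by
      calc S ^ (1/p) ≤ (α ^ p) ^ (1/p) :=
            Real.rpow_le_rpow Snn hS (by positivity)
        _ = α := by
            rw [← Real.rpow_mul hα.le, mul_one_div, div_self (ne_of_gt hp0), Real.rpow_one]
    have e3 : (∑ i ∈ s, |c i| ^ q) ^ (1/q) ≤ N := by
      rw [hN]
      apply Real.rpow_le_rpow (Finset.sum_nonneg fun i _ => by positivity)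
      · exact Finset.sum_le_sum_of_subset_of_nonneg (Finset.subset_univ s)
          (fun i _ _ => by positivity)
      · positivity
    have hH : ∑ i ∈ s, c i * (b i - b k) ≤ α * N := by
      have hcomm : ∑ i ∈ s, c i * (b i - b k) = ∑ i ∈ s, (b i - b k) * c i :=
        Finset.sum_congr rfl fun i _ => mul_comm _ _
      rw [hcomm]
      calc ∑ i ∈ s, (b i - b k) * c i
          ≤ (∑ i ∈ s, |b i - b k| ^ p) ^ (1/p) * (∑ i ∈ s, |c i| ^ q) ^ (1/q) := holder
        _ = S ^ (1/p) * (∑ i ∈ s, |c i| ^ q) ^ (1/q) := by rw [e1]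
        _ ≤ α * N := mul_le_mul e2 e3
            (Real.rpow_nonneg (Finset.sum_nonneg fun i _ => by positivity) _) hα.le
    linarith
end

section
/- Let ζ_p := max_{c ∈ Δ_A} ( −α ‖c‖_q + ⟨c, b⟩ ) and χ_p := max{ i ∈ {1,…,A} : b_i ≥ ζ_p }. Then for every k ∈ {1,…,A}: k ≤ χ_p if and only if there exists a real x with x ≤ b_k and ∑_{i=1}^{k} (b_i − x)^p = α^p. -/
open Finset

/-- With `ζ_p = max_{c ∈ Δ_A} (-α ‖c‖_q + ⟨c, b⟩)` and
`χ_p = max {i : b_i ≥ ζ_p}`, for every `k`: `k ≤ χ_p` iff there exists a real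
`x ≤ b_k` with `∑_{i=1}^k (b_i - x)^p = α^p` (0-based: sum over `i ≤ k`). -/
theorem stmt14 (A : ℕ) [NeZero A] (b : Fin A → ℝ)
    (hb : ∀ i j : Fin A, i ≤ j → b j ≤ b i)
    (α : ℝ) (hα : 0 < α) (p q : ℝ) (hp : 1 < p) (hq : q = p / (p - 1))
    (ζ : ℝ)
    (hζ : IsGreatest {y : ℝ | ∃ c : Fin A → ℝ, (∀ i, 0 ≤ c i) ∧ (∑ i, c i = 1) ∧
        y = -α * (∑ i, |c i| ^ q) ^ (1 / q) + ∑ i, c i * b i} ζ)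
    (χ : Fin A) (hχ : IsGreatest {i : Fin A | ζ ≤ b i} χ) :
    ∀ k : Fin A, k ≤ χ ↔
      ∃ x : ℝ, x ≤ b k ∧
        (∑ i ∈ Finset.univ.filter (fun i : Fin A => i ≤ k), (b i - x) ^ p) = α ^ p := by
  have hpq : p.HolderConjugate q := (Real.holderConjugate_iff_eq_conjExponent hp).2 hq
  have hp0 : 0 < p := hpq.pos
  have hq0 : 0 < q := hpq.symm.pos
  set g : ℝ → ℝ := fun t => ∑ i, max (b i - t) 0 ^ p with hgdef
  -- Hölder upper bound: whenever g t ≤ α^p, every achievable value is ≤ t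
  have hold : ∀ t : ℝ, g t ≤ α ^ p → ζ ≤ t := by
    intro t hgt
    obtain ⟨c, hc0, hc1, hcval⟩ := hζ.1
    set m : Fin A → ℝ := fun i => max (b i - t) 0 with hm
    have hm0 : ∀ i, 0 ≤ m i := fun i => le_max_right _ _
    have h1 : ∑ i, c i * b i - t = ∑ i, c i * (b i - t) := by
      simp [mul_sub, Finset.sum_sub_distrib, ← Finset.sum_mul, hc1]
    have h2 : ∑ i, c i * (b i - t) ≤ ∑ i, c i * m i :=
      Finset.sum_le_sum fun i _ => mul_le_mul_of_nonneg_left (le_max_left _ _) (hc0 i)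
    have h3 : ∑ i, c i * m i ≤ (∑ i, |c i| ^ q) ^ (1 / q) * (∑ i, |m i| ^ p) ^ (1 / p) :=
      Real.inner_le_Lp_mul_Lq Finset.univ c m hpq.symm
    have h4 : (∑ i, |m i| ^ p) ^ (1 / p) ≤ α := by
      have : (∑ i, |m i| ^ p) = g t := by
        simp only [hgdef]
        exact Finset.sum_congr rfl fun i _ => by rw [abs_of_nonneg (hm0 i)]
      rw [this]
      calc g t ^ (1 / p) ≤ (α ^ p) ^ (1 / p) := by
            apply Real.rpow_le_rpow _ hgt (by positivity)
            exact Finset.sum_nonneg fun i _ => Real.rpow_nonneg (hm0 i) p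
        _ = α := by
            rw [← Real.rpow_mul hα.le, mul_one_div, div_self hp0.ne', Real.rpow_one]
    have hN : 0 ≤ (∑ i, |c i| ^ q) ^ (1 / q) := by positivity
    have : ∑ i, c i * b i - t ≤ (∑ i, |c i| ^ q) ^ (1 / q) * α := by
      calc ∑ i, c i * b i - t = ∑ i, c i * (b i - t) := h1
        _ ≤ ∑ i, c i * m i := h2
        _ ≤ (∑ i, |c i| ^ q) ^ (1 / q) * (∑ i, |m i| ^ p) ^ (1 / p) := h3
        _ ≤ (∑ i, |c i| ^ q) ^ (1 / q) * α := mul_le_mul_of_nonneg_left h4 hN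
    rw [hcval]; nlinarith [this]
  -- continuity of g
  have hgcont : Continuous g := by
    apply continuous_finset_sum
    intro i _
    have h1 : Continuous fun t : ℝ => max (b i - t) 0 :=
      (continuous_const.sub continuous_id).max continuous_const
    have h2 : Continuous fun y : ℝ => y ^ p :=
      continuous_iff_continuousAt.2 fun x => Real.continuousAt_rpow_const x p (Or.inr hp0.le)
    exact h2.comp h1
  -- g ζ ≥ α^p
  have hGge : α ^ p ≤ g ζ := by
    by_contra hlt
    push_neg at hlt
    have hev : ∀ᶠ t in nhds ζ, g t < α ^ p :=
      (hgcont.continuousAt).eventually_lt continuousAt_const hlt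
    have : ∀ᶠ t in nhdsWithin ζ (Set.Iio ζ), g t < α ^ p ∧ t ∈ Set.Iio ζ :=
      (hev.filter_mono nhdsWithin_le_nhds).and self_mem_nhdsWithin
    obtain ⟨t, hgt, ht⟩ := this.exists
    exact absurd (hold t hgt.le) (not_le.2 ht)
  have hGpos : 0 < g ζ := lt_of_lt_of_le (Real.rpow_pos_of_pos hα p) hGge
  -- index ≤ χ iff ζ ≤ b i
  have hidx : ∀ i : Fin A, i ≤ χ ↔ ζ ≤ b i := by
    intro i
    constructor
    · intro h; exact le_trans hχ.1 (hb i χ h)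
    · intro h; exact hχ.2 h
  -- g ζ = sum over i ≤ χ
  have hGsum : g ζ = ∑ i ∈ Finset.univ.filter (fun i : Fin A => i ≤ χ), (b i - ζ) ^ p := by
    show ∑ i, max (b i - ζ) 0 ^ p = _
    rw [← Finset.sum_filter_add_sum_filter_not Finset.univ (fun i : Fin A => i ≤ χ)
      (fun i => max (b i - ζ) 0 ^ p)]
    have e1 : ∑ i ∈ Finset.univ.filter (fun i : Fin A => i ≤ χ), max (b i - ζ) 0 ^ p
        = ∑ i ∈ Finset.univ.filter (fun i : Fin A => i ≤ χ), (b i - ζ) ^ p := by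
      apply Finset.sum_congr rfl
      intro i hi
      rw [Finset.mem_filter] at hi
      rw [max_eq_left (sub_nonneg.2 ((hidx i).1 hi.2))]
    have e2 : ∑ i ∈ Finset.univ.filter (fun i : Fin A => ¬ i ≤ χ), max (b i - ζ) 0 ^ p = 0 := by
      apply Finset.sum_eq_zero
      intro i hi
      rw [Finset.mem_filter] at hi
      have : b i < ζ := by
        by_contra h; push_neg at h; exact hi.2 ((hidx i).2 h)
      rw [max_eq_right (by linarith), Real.zero_rpow hp0.ne']
    rw [e1, e2, add_zero]
  -- g ζ ≤ α^p  via explicit dual vector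
  have hGle : g ζ ≤ α ^ p := by
    set S : ℝ := ∑ i, max (b i - ζ) 0 ^ (p - 1) with hS
    have hm0 : ∀ i, (0:ℝ) ≤ max (b i - ζ) 0 := fun i => le_max_right _ _
    have hSpos : 0 < S := by
      obtain ⟨i, _, hi⟩ := Finset.exists_lt_of_sum_lt (by simpa using hGpos :
        ∑ _i : Fin A, (0:ℝ) < ∑ i, max (b i - ζ) 0 ^ p)
      have hmi : 0 < max (b i - ζ) 0 := by
        by_contra h
        push_neg at h
        rw [le_antisymm h (hm0 i), Real.zero_rpow hp0.ne'] at hi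
        exact lt_irrefl 0 hi
      have : 0 < max (b i - ζ) 0 ^ (p - 1) := Real.rpow_pos_of_pos hmi _
      refine lt_of_lt_of_le this ?_
      apply Finset.single_le_sum (fun j _ => Real.rpow_nonneg (hm0 j) _) (Finset.mem_univ i)
    set c : Fin A → ℝ := fun i => max (b i - ζ) 0 ^ (p - 1) / S with hc
    have hc0 : ∀ i, 0 ≤ c i := fun i => div_nonneg (Real.rpow_nonneg (hm0 i) _) hSpos.le
    have hc1 : ∑ i, c i = 1 := by
      rw [hc, ← Finset.sum_div, ← hS, div_self hSpos.ne']
    have hnorm : (∑ i, |c i| ^ q) = g ζ / S ^ q := by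
      rw [hgdef, Finset.sum_div]
      apply Finset.sum_congr rfl
      intro i _
      rw [abs_of_nonneg (hc0 i), hc, Real.div_rpow (Real.rpow_nonneg (hm0 i) _) hSpos.le,
        ← Real.rpow_mul (hm0 i), hpq.sub_one_mul_conj]
    have hnq : (∑ i, |c i| ^ q) ^ (1 / q) = g ζ ^ (1 / q) / S := by
      rw [hnorm, Real.div_rpow hGpos.le (by positivity), ← Real.rpow_mul hSpos.le,
        mul_one_div, div_self hq0.ne', Real.rpow_one]
    have hdot : ∑ i, c i * b i = g ζ / S + ζ := by
      have h1 : ∑ i, c i * b i - ζ = ∑ i, c i * (b i - ζ) := by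
        simp [mul_sub, Finset.sum_sub_distrib, ← Finset.sum_mul, hc1]
      have h2 : ∑ i, c i * (b i - ζ) = g ζ / S := by
        rw [hgdef, Finset.sum_div]
        apply Finset.sum_congr rfl
        intro i _
        rw [hc]
        show max (b i - ζ) 0 ^ (p - 1) / S * (b i - ζ) = max (b i - ζ) 0 ^ p / S
        rw [div_mul_eq_mul_div]
        congr 1
        rcases le_or_gt (b i - ζ) 0 with h | h
        · rw [max_eq_right h, Real.zero_rpow (by linarith : p - 1 ≠ 0),
            Real.zero_rpow hp0.ne', zero_mul]
        · rw [max_eq_left h.le, ← Real.rpow_add_one h.ne' (p - 1), sub_add_cancel]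
      linarith [h1, h2]
    have hmem : -α * (∑ i, |c i| ^ q) ^ (1 / q) + ∑ i, c i * b i ≤ ζ :=
      hζ.2 ⟨c, hc0, hc1, rfl⟩
    rw [hnq, hdot] at hmem
    have hkey : g ζ ≤ α * g ζ ^ (1 / q) := by
      have h2 : g ζ / S ≤ α * g ζ ^ (1 / q) / S := by
        rw [mul_div_assoc]; linarith [hmem]
      exact (div_le_div_iff_of_pos_right hSpos).mp h2
    have hq14 : g ζ ^ (1 / p) * g ζ ^ (1 / q) = g ζ := by
      rw [← Real.rpow_add hGpos, one_div, one_div, hpq.inv_add_inv_eq_one, Real.rpow_one]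
    have hup : g ζ ^ (1 / p) ≤ α := by
      have hqpos : 0 < g ζ ^ (1 / q) := Real.rpow_pos_of_pos hGpos _
      have h3 := hkey
      nth_rewrite 1 [← hq14] at h3
      exact le_of_mul_le_mul_right h3 hqpos
    calc g ζ = (g ζ ^ (1 / p)) ^ p := by
          rw [← Real.rpow_mul hGpos.le, one_div, inv_mul_cancel₀ hp0.ne', Real.rpow_one]
      _ ≤ α ^ p := Real.rpow_le_rpow (Real.rpow_nonneg hGpos.le _) hup hp0.le
  have hG : ∑ i ∈ Finset.univ.filter (fun i : Fin A => i ≤ χ), (b i - ζ) ^ p = α ^ p := by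
    rw [← hGsum]; exact le_antisymm hGle hGge
  -- Main equivalence
  intro k
  constructor
  · -- forward: k ≤ χ → existence of x via IVT
    intro hk
    have hζbk : ζ ≤ b k := (hidx k).1 hk
    set f : ℝ → ℝ := fun x => ∑ i ∈ Finset.univ.filter (fun i : Fin A => i ≤ k), (b i - x) ^ p
      with hf
    have hfcont : Continuous f := by
      apply continuous_finset_sum
      intro i _
      have h2 : Continuous fun y : ℝ => y ^ p :=
        continuous_iff_continuousAt.2 fun x => Real.continuousAt_rpow_const x p (Or.inr hp0.le)
      exact h2.comp (continuous_const.sub continuous_id)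
    have hfb : f (b k) ≤ α ^ p := by
      rw [← hG]
      calc f (b k) ≤ ∑ i ∈ Finset.univ.filter (fun i : Fin A => i ≤ k), (b i - ζ) ^ p := by
            apply Finset.sum_le_sum
            intro i hi
            rw [Finset.mem_filter] at hi
            exact Real.rpow_le_rpow (sub_nonneg.2 (hb i k hi.2)) (by linarith) hp0.le
        _ ≤ ∑ i ∈ Finset.univ.filter (fun i : Fin A => i ≤ χ), (b i - ζ) ^ p := by
            apply Finset.sum_le_sum_of_subset_of_nonneg
            · intro i hi
              rw [Finset.mem_filter] at hi ⊢
              exact ⟨hi.1, le_trans hi.2 hk⟩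
            · intro i hi _
              rw [Finset.mem_filter] at hi
              exact Real.rpow_nonneg (sub_nonneg.2 ((hidx i).1 hi.2)) p
    have hfa : α ^ p ≤ f (b k - α) := by
      have hk' : k ∈ Finset.univ.filter (fun i : Fin A => i ≤ k) := by
        rw [Finset.mem_filter]; exact ⟨Finset.mem_univ k, le_refl k⟩
      calc α ^ p = (b k - (b k - α)) ^ p := by ring_nf
        _ ≤ f (b k - α) := by
            apply Finset.single_le_sum (f := fun i => (b i - (b k - α)) ^ p) _ hk'
            intro i hi
            rw [Finset.mem_filter] at hi
            have : α ≤ b i - (b k - α) := by linarith [hb i k hi.2]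
            exact Real.rpow_nonneg (by linarith) p
    have hsub : Set.Icc (f (b k)) (f (b k - α)) ⊆ f '' Set.Icc (b k - α) (b k) :=
      intermediate_value_Icc' (by linarith) hfcont.continuousOn
    obtain ⟨x, hx, hfx⟩ := hsub ⟨hfb, hfa⟩
    exact ⟨x, hx.2, hfx⟩
  · -- backward
    rintro ⟨x, hx, hsum⟩
    by_contra hk
    push_neg at hk
    have hbk : b k < ζ := by
      by_contra h; push_neg at h
      exact absurd ((hidx k).2 h) (not_le.2 hk)
    have hstrict : ∑ i ∈ Finset.univ.filter (fun i : Fin A => i ≤ χ), (b i - ζ) ^ p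
        < ∑ i ∈ Finset.univ.filter (fun i : Fin A => i ≤ χ), (b i - x) ^ p := by
      apply Finset.sum_lt_sum
      · intro i hi
        rw [Finset.mem_filter] at hi
        exact Real.rpow_le_rpow (sub_nonneg.2 ((hidx i).1 hi.2)) (by linarith) hp0.le
      · refine ⟨χ, by simp, ?_⟩
        have h1 : ζ ≤ b χ := hχ.1
        exact Real.rpow_lt_rpow (by linarith) (by linarith) hp0
    have hmono : ∑ i ∈ Finset.univ.filter (fun i : Fin A => i ≤ χ), (b i - x) ^ p
        ≤ ∑ i ∈ Finset.univ.filter (fun i : Fin A => i ≤ k), (b i - x) ^ p := by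
      apply Finset.sum_le_sum_of_subset_of_nonneg
      · intro i hi
        rw [Finset.mem_filter] at hi ⊢
        exact ⟨hi.1, le_trans hi.2 hk.le⟩
      · intro i hi _
        rw [Finset.mem_filter] at hi
        have := hb i k hi.2
        exact Real.rpow_nonneg (by linarith) p
    rw [hG] at hstrict
    rw [hsum] at hmono
    exact absurd (lt_of_lt_of_le hstrict hmono) (lt_irrefl _)
end

section
/- Let ζ_p := max_{c ∈ Δ_A} ( −α ‖c‖_q + ⟨c, b⟩ ) and χ_p := max{ i ∈ {1,…,A} : b_i ≥ ζ_p }. Suppose 1 ≤ k < A, k ≤ χ_p, and λ_k is a real with λ_k ≤ b_k and ∑_{i=1}^{k} (b_i − λ_k)^p = α^p. Then: (i) if λ_k ≤ b_{k+1}, then k + 1 ≤ χ_p; (ii) if λ_k > b_{k+1}, then χ_p = k. -/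
/-- With `ζ_p = max_{c ∈ Δ_A} (-α ‖c‖_q + ⟨c, b⟩)` and
`χ_p = max {i : b_i ≥ ζ_p}`: if `k < A` (so `k+1` is a valid index), `k ≤ χ_p`,
`λ_k ≤ b_k` and `∑_{i=1}^k (b_i - λ_k)^p = α^p` (0-based: sum over `i ≤ k`), then
(i) `λ_k ≤ b_{k+1}` implies `k+1 ≤ χ_p`; (ii) `λ_k > b_{k+1}` implies `χ_p = k`. -/
theorem stmt15 (A : ℕ) [NeZero A] (b : Fin A → ℝ)
    (hb : ∀ i j : Fin A, i ≤ j → b j ≤ b i)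
    (α : ℝ) (hα : 0 < α) (p q : ℝ) (hp : 1 < p) (hq : q = p / (p - 1))
    (ζ : ℝ)
    (hζ : IsGreatest {y : ℝ | ∃ c : Fin A → ℝ, (∀ i, 0 ≤ c i) ∧ (∑ i, c i = 1) ∧
        y = -α * (∑ i, |c i| ^ q) ^ (1 / q) + ∑ i, c i * b i} ζ)
    (χ : Fin A) (hχ : IsGreatest {i : Fin A | ζ ≤ b i} χ)
    (k : Fin A) (hk : (k : ℕ) + 1 < A) (hkχ : k ≤ χ)
    (lam : ℝ) (hlam : lam ≤ b k)
    (hsum : (∑ i ∈ Finset.univ.filter (fun i : Fin A => i ≤ k), (b i - lam) ^ p) = α ^ p) :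
    (lam ≤ b ⟨(k : ℕ) + 1, hk⟩ → (⟨(k : ℕ) + 1, hk⟩ : Fin A) ≤ χ) ∧
    (b ⟨(k : ℕ) + 1, hk⟩ < lam → χ = k) := by
  have hpq : p.HolderConjugate q := hq ▸ Real.HolderConjugate.conjExponent hp
  have hp0 : (0:ℝ) < p := hpq.pos
  have hq0 : (0:ℝ) < q := hpq.symm.pos
  set k1 : Fin A := ⟨(k : ℕ) + 1, hk⟩ with hk1
  set S : Finset (Fin A) := Finset.univ.filter (fun i : Fin A => i ≤ k) with hS
  have hbi : ∀ i ∈ S, (0:ℝ) ≤ b i - lam := by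
    intro i hi
    rw [hS, Finset.mem_filter] at hi
    have := hb i k hi.2
    linarith
  have hkk1 : k ≤ k1 := by
    rw [Fin.le_def]; simp [hk1]
  have hbk1 : ∀ i ∈ S, b k1 ≤ b i := by
    intro i hi
    rw [hS, Finset.mem_filter] at hi
    exact hb i k1 (le_trans hi.2 hkk1)
  -- Part 1 : lam ≤ ζ, via the explicit maximizer supported on S
  have hlow : lam ≤ ζ := by
    set w : Fin A → ℝ := fun i => (b i - lam) ^ (p - 1) with hw
    have hwnn : ∀ i ∈ S, 0 ≤ w i := fun i hi => Real.rpow_nonneg (hbi i hi) _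
    set S0 : ℝ := ∑ i ∈ S, w i with hS0
    have hS0pos : 0 < S0 := by
      have hsum_pos : 0 < ∑ i ∈ S, (b i - lam) ^ p := by
        rw [hsum]; exact Real.rpow_pos_of_pos hα p
      obtain ⟨i, hi, hipos⟩ : ∃ i ∈ S, 0 < (b i - lam) ^ p := by
        by_contra h
        push_neg at h
        have : ∑ i ∈ S, (b i - lam) ^ p ≤ 0 := Finset.sum_nonpos h
        linarith
      have hbl : 0 < b i - lam := by
        rcases lt_or_eq_of_le (hbi i hi) with h | h
        · exact h
        · rw [← h, Real.zero_rpow hp0.ne'] at hipos; linarith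
      exact Finset.sum_pos' hwnn ⟨i, hi, Real.rpow_pos_of_pos hbl _⟩
    set c : Fin A → ℝ := fun i => if i ∈ S then w i / S0 else 0 with hc
    have hc0 : ∀ i, 0 ≤ c i := by
      intro i
      rw [hc]
      by_cases h : i ∈ S
      · simp only [h, if_pos]
        exact div_nonneg (hwnn i h) hS0pos.le
      · simp [h]
    have hc1 : ∑ i, c i = 1 := by
      rw [hc]
      rw [Finset.sum_ite_mem, Finset.univ_inter, ← Finset.sum_div, ← hS0,
        div_self hS0pos.ne']
    apply hζ.2
    refine ⟨c, hc0, hc1, ?_⟩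
    -- the q-norm term
    have hnormsum : ∑ i, |c i| ^ q = α ^ p / S0 ^ q := by
      have step : ∀ i, |c i| ^ q = if i ∈ S then (b i - lam) ^ p / S0 ^ q else 0 := by
        intro i
        rw [abs_of_nonneg (hc0 i), hc]
        by_cases h : i ∈ S
        · simp only [h, if_pos]
          rw [Real.div_rpow (hwnn i h) hS0pos.le, hw]
          congr 1
          rw [← Real.rpow_mul (hbi i h), hpq.sub_one_mul_conj]
        · simp [h, Real.zero_rpow hq0.ne']
      rw [Finset.sum_congr rfl (fun i _ => step i), Finset.sum_ite_mem,
        Finset.univ_inter, ← Finset.sum_div, hsum]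
    have hnorm : (∑ i, |c i| ^ q) ^ (1 / q) = α ^ (p - 1) / S0 := by
      rw [hnormsum, Real.div_rpow (Real.rpow_nonneg hα.le p)
        (Real.rpow_nonneg hS0pos.le q)]
      rw [← Real.rpow_mul hα.le, ← Real.rpow_mul hS0pos.le,
        mul_one_div, mul_one_div, div_self hq0.ne', Real.rpow_one,
        hpq.div_conj_eq_sub_one]
    -- the linear term
    have hdot : ∑ i, c i * b i = α ^ p / S0 + lam := by
      have step : ∀ i, c i * b i = if i ∈ S then (w i * b i) / S0 else 0 := by
        intro i
        rw [hc]
        by_cases h : i ∈ S <;> simp [h, div_mul_eq_mul_div]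
      rw [Finset.sum_congr rfl (fun i _ => step i), Finset.sum_ite_mem,
        Finset.univ_inter, ← Finset.sum_div]
      have step2 : ∀ i ∈ S, w i * b i = (b i - lam) ^ p + lam * w i := by
        intro i hi
        have hxp : (b i - lam) ^ p = (b i - lam) ^ (p - 1) * (b i - lam) := by
          rw [show p = p - 1 + 1 by ring, Real.rpow_add' (hbi i hi)
            (by rw [sub_add_cancel]; exact hp0.ne'), Real.rpow_one]
          ring_nf
        rw [hxp, hw]
        ring
      rw [Finset.sum_congr rfl step2, Finset.sum_add_distrib, hsum,
        ← Finset.mul_sum, ← hS0]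
      field_simp
    rw [hnorm, hdot]
    have hαp : α * α ^ (p - 1) = α ^ p := by
      have h := Real.rpow_add hα 1 (p - 1)
      rw [Real.rpow_one, show (1:ℝ) + (p - 1) = p by ring] at h
      exact h.symm
    rw [show -α * (α ^ (p - 1) / S0) = -(α ^ p) / S0 by rw [← hαp]; ring]
    ring
  -- Part 2 : if lam ≤ b k1 then ζ ≤ b k1
  have hupper : lam ≤ b k1 → ζ ≤ b k1 := by
    intro hl1
    obtain ⟨c, hc0, hc1, hval⟩ := hζ.1
    set x : Fin A → ℝ := fun i => if i ∈ S then b i - b k1 else 0 with hx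
    have hx0 : ∀ i, 0 ≤ x i := by
      intro i
      rw [hx]
      by_cases h : i ∈ S
      · simp only [h, if_pos]
        linarith [hbk1 i h]
      · simp [h]
    have hble : ∀ i, b i ≤ b k1 + x i := by
      intro i
      rw [hx]
      by_cases h : i ∈ S
      · simp [h]
      · simp only [h, if_neg, if_false, add_zero]
        rw [hS, Finset.mem_filter] at h
        push_neg at h
        have hki : k < i := h (Finset.mem_univ i)
        have : k1 ≤ i := by
          rw [Fin.le_def, hk1]
          exact hki
        exact hb k1 i this
    have hxp : ∑ i, x i ^ p ≤ α ^ p := by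
      have step : ∀ i, x i ^ p = if i ∈ S then (b i - b k1) ^ p else 0 := by
        intro i
        rw [hx]
        by_cases h : i ∈ S <;> simp [h, Real.zero_rpow hp0.ne']
      rw [Finset.sum_congr rfl (fun i _ => step i), Finset.sum_ite_mem,
        Finset.univ_inter, ← hsum]
      refine Finset.sum_le_sum fun i hi => ?_
      refine Real.rpow_le_rpow (by linarith [hbk1 i hi]) (by linarith) hp0.le
    have hholder := Real.inner_le_Lp_mul_Lq_of_nonneg Finset.univ hpq
      (fun i _ => hx0 i) (fun i _ => hc0 i)
    have hxnorm : (∑ i, x i ^ p) ^ (1 / p) ≤ α := by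
      calc (∑ i, x i ^ p) ^ (1 / p)
          ≤ (α ^ p) ^ (1 / p) := by
            refine Real.rpow_le_rpow ?_ hxp (by positivity)
            exact Finset.sum_nonneg fun i _ => Real.rpow_nonneg (hx0 i) p
        _ = α := by
            rw [← Real.rpow_mul hα.le, mul_one_div, div_self hp0.ne',
              Real.rpow_one]
    set N : ℝ := (∑ i, |c i| ^ q) ^ (1 / q) with hN
    have hNc : (∑ i, c i ^ q) ^ (1 / q) = N := by
      rw [hN]
      congr 1
      exact Finset.sum_congr rfl fun i _ => by rw [abs_of_nonneg (hc0 i)]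
    have hN0 : 0 ≤ N := Real.rpow_nonneg
      (Finset.sum_nonneg fun i _ => Real.rpow_nonneg (abs_nonneg _) q) _
    have hcx : ∑ i, x i * c i ≤ α * N := by
      calc ∑ i, x i * c i
          ≤ (∑ i, x i ^ p) ^ (1 / p) * (∑ i, c i ^ q) ^ (1 / q) := hholder
        _ = (∑ i, x i ^ p) ^ (1 / p) * N := by rw [hNc]
        _ ≤ α * N := mul_le_mul_of_nonneg_right hxnorm hN0
    have hcb : ∑ i, c i * b i ≤ b k1 + α * N := by
      calc ∑ i, c i * b i
          ≤ ∑ i, c i * (b k1 + x i) :=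
            Finset.sum_le_sum fun i _ =>
              mul_le_mul_of_nonneg_left (hble i) (hc0 i)
        _ = b k1 * ∑ i, c i + ∑ i, x i * c i := by
            rw [Finset.mul_sum, ← Finset.sum_add_distrib]
            exact Finset.sum_congr rfl fun i _ => by ring
        _ = b k1 + ∑ i, x i * c i := by rw [hc1, mul_one]
        _ ≤ b k1 + α * N := by linarith [hcx]
    linarith [hcb, hval]
  refine ⟨fun hl1 => hχ.2 (hupper hl1), fun hl1 => ?_⟩
  refine le_antisymm ?_ hkχ
  by_contra hcon
  have hkχ' : k < χ := lt_of_not_ge hcon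
  have hk1χ : k1 ≤ χ := by
    rw [Fin.le_def, hk1]
    exact hkχ'
  have h1 : b χ ≤ b k1 := hb k1 χ hk1χ
  have h2 : ζ ≤ b χ := hχ.1
  linarith
end

section
/- Let A ≥ 1 be an integer, b ∈ ℝ^A sorted in descending order (b_1 ≥ b_2 ≥ ⋯ ≥ b_A), p ≥ 1 real, and define f(x) := ( ∑_{i : b_i ≥ x} (b_i − x)^p )^{1/p} for x ∈ [b_A, b_1]. Then (i) f(x) − f(y) ≥ y − x for all x ≤ y in [b_A, b_1]; (ii) consequently, for any α ≥ 0, γ ∈ [0,1], β ≥ 0, ε ≥ 0 and reals κ, κ̂ with |κ − κ̂| ≤ ε, if λ, λ̂ ∈ [b_A, b_1] satisfy f(λ) = α + γβκ and f(λ̂) = α + γβκ̂, then |λ − λ̂| ≤ γβε. -/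
/-- Key inequality: for a nonempty finset, nonneg `a`, `c ≥ 0`, `p ≥ 1`,
`(∑ aᵢ^p)^(1/p) + c ≤ (∑ (aᵢ + c)^p)^(1/p)`. -/
lemma stmt18_key {ι : Type*} (s : Finset ι) (hs : s.Nonempty) (a : ι → ℝ)
    (ha : ∀ i ∈ s, 0 ≤ a i) (c : ℝ) (hc : 0 ≤ c) (p : ℝ) (hp : 1 ≤ p) :
    (∑ i ∈ s, (a i) ^ p) ^ (1 / p) + c ≤ (∑ i ∈ s, (a i + c) ^ p) ^ (1 / p) := by
  have hp0 : 0 < p := lt_of_lt_of_le one_pos hp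
  set M : ℝ := (∑ i ∈ s, (a i + c) ^ p) ^ (1 / p) with hMdef
  have hSnn : 0 ≤ ∑ i ∈ s, (a i + c) ^ p :=
    Finset.sum_nonneg fun i hi => Real.rpow_nonneg (by linarith [ha i hi]) p
  have hMnn : 0 ≤ M := Real.rpow_nonneg hSnn _
  have hMp : M ^ p = ∑ i ∈ s, (a i + c) ^ p := by
    rw [hMdef, ← Real.rpow_mul hSnn, one_div, inv_mul_cancel₀ hp0.ne',
      Real.rpow_one]
  have hle : ∀ i ∈ s, a i + c ≤ M := by
    intro i hi
    have h1 : (a i + c) ^ p ≤ M ^ p := by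
      rw [hMp]
      exact Finset.single_le_sum (f := fun j => (a j + c) ^ p)
        (fun j hj => Real.rpow_nonneg (by linarith [ha j hj]) p) hi
    exact (Real.rpow_le_rpow_iff (by linarith [ha i hi]) hMnn hp0).mp h1
  obtain ⟨i₀, hi₀⟩ := hs
  have hcM : c ≤ M := le_trans (by linarith [ha i₀ hi₀]) (hle i₀ hi₀)
  rcases eq_or_lt_of_le hMnn with hM0 | hMpos
  · -- M = 0 : all terms vanish
    have hc0 : c = 0 := le_antisymm (hM0 ▸ hcM) hc
    have haz : ∀ i ∈ s, a i = 0 := fun i hi =>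
      le_antisymm (by have := hle i hi; linarith [hM0]) (ha i hi)
    have : (∑ i ∈ s, (a i) ^ p) = 0 := by
      apply Finset.sum_eq_zero
      intro i hi
      rw [haz i hi]
      exact Real.zero_rpow hp0.ne'
    rw [this, hc0, Real.zero_rpow (by positivity : (1 : ℝ)/p ≠ 0), add_zero]
    exact hMnn
  · -- M > 0
    have key : ∀ i ∈ s, (a i) ^ p ≤ (a i + c) ^ p * ((M - c) / M) ^ p := by
      intro i hi
      have hai := ha i hi
      have h1 : a i ≤ (a i + c) * ((M - c) / M) := by
        rw [div_eq_inv_mul, ← mul_assoc, ← sub_nonneg]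
        have hM := hle i hi
        have heq : (a i + c) * M⁻¹ * (M - c) - a i
            = M⁻¹ * (c * (M - (a i + c))) := by
          field_simp; ring
        rw [heq]
        exact mul_nonneg (inv_nonneg.mpr hMnn)
          (mul_nonneg hc (by linarith))
      calc (a i) ^ p ≤ ((a i + c) * ((M - c) / M)) ^ p :=
            Real.rpow_le_rpow hai h1 hp0.le
        _ = (a i + c) ^ p * ((M - c) / M) ^ p :=
            Real.mul_rpow (by linarith) (div_nonneg (by linarith) hMnn)
    have hsum : (∑ i ∈ s, (a i) ^ p) ≤ (M - c) ^ p := by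
      calc (∑ i ∈ s, (a i) ^ p) ≤ ∑ i ∈ s, (a i + c) ^ p * ((M - c) / M) ^ p :=
            Finset.sum_le_sum key
        _ = (∑ i ∈ s, (a i + c) ^ p) * ((M - c) / M) ^ p := by
            rw [← Finset.sum_mul]
        _ = (M * ((M - c) / M)) ^ p := by
            rw [← hMp, ← Real.mul_rpow hMnn (div_nonneg (by linarith) hMnn)]
        _ = (M - c) ^ p := by
            rw [mul_div_cancel₀ _ hMpos.ne']
    have := Real.rpow_le_rpow (Finset.sum_nonneg fun i hi =>
      Real.rpow_nonneg (ha i hi) p) hsum (by positivity : (0:ℝ) ≤ 1/p)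
    rw [← Real.rpow_mul (by linarith : (0:ℝ) ≤ M - c), mul_one_div,
      div_self hp0.ne', Real.rpow_one] at this
    linarith

/-- For `f(x) = (∑_{i : b_i ≥ x} (b_i - x)^p)^{1/p}` on `[b_A, b_1]`:
(i) `f(x) - f(y) ≥ y - x` for `x ≤ y` in the interval; (ii) if `|κ - κ̂| ≤ ε` and
`λ, λ̂ ∈ [b_A, b_1]` satisfy `f(λ) = α + γβκ` and `f(λ̂) = α + γβκ̂`, then
`|λ - λ̂| ≤ γβε`. -/
theorem stmt18 (A : ℕ) (hA : 0 < A) (b : Fin A → ℝ)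
    (hb : ∀ i j : Fin A, i ≤ j → b j ≤ b i)
    (p : ℝ) (hp : 1 ≤ p) :
    (∀ x y : ℝ, x ∈ Set.Icc (b ⟨A - 1, by omega⟩) (b ⟨0, hA⟩) →
      y ∈ Set.Icc (b ⟨A - 1, by omega⟩) (b ⟨0, hA⟩) → x ≤ y →
      y - x ≤ (∑ i, if x ≤ b i then (b i - x) ^ p else 0) ^ (1 / p) -
        (∑ i, if y ≤ b i then (b i - y) ^ p else 0) ^ (1 / p)) ∧
    (∀ α γ β ε κ κ' lam lam' : ℝ, 0 ≤ α → 0 ≤ γ → γ ≤ 1 → 0 ≤ β → 0 ≤ ε →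
      |κ - κ'| ≤ ε →
      lam ∈ Set.Icc (b ⟨A - 1, by omega⟩) (b ⟨0, hA⟩) →
      lam' ∈ Set.Icc (b ⟨A - 1, by omega⟩) (b ⟨0, hA⟩) →
      (∑ i, if lam ≤ b i then (b i - lam) ^ p else 0) ^ (1 / p) = α + γ * β * κ →
      (∑ i, if lam' ≤ b i then (b i - lam') ^ p else 0) ^ (1 / p) = α + γ * β * κ' →
      |lam - lam'| ≤ γ * β * ε) := by
  have hp0 : 0 < p := lt_of_lt_of_le one_pos hp
  have part1 : ∀ x y : ℝ, x ∈ Set.Icc (b ⟨A - 1, by omega⟩) (b ⟨0, hA⟩) →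
      y ∈ Set.Icc (b ⟨A - 1, by omega⟩) (b ⟨0, hA⟩) → x ≤ y →
      y - x ≤ (∑ i, if x ≤ b i then (b i - x) ^ p else 0) ^ (1 / p) -
        (∑ i, if y ≤ b i then (b i - y) ^ p else 0) ^ (1 / p) := by
    intro x y hx hy hxy
    set s : Finset (Fin A) := Finset.univ.filter (fun i => y ≤ b i) with hsdef
    have hs : s.Nonempty := ⟨⟨0, hA⟩, by simp [hsdef, hy.2]⟩
    have hys : ∀ i ∈ s, y ≤ b i := by
      intro i hi; simpa [hsdef] using hi
    have hfy : (∑ i, if y ≤ b i then (b i - y) ^ p else 0)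
        = ∑ i ∈ s, (b i - y) ^ p := by
      rw [hsdef, Finset.sum_filter]
    have hstep1 : (∑ i ∈ s, ((b i - y) + (y - x)) ^ p)
        ≤ ∑ i, if x ≤ b i then (b i - x) ^ p else 0 := by
      have : (∑ i ∈ s, ((b i - y) + (y - x)) ^ p)
          = ∑ i, if y ≤ b i then (b i - x) ^ p else 0 := by
        rw [hsdef, Finset.sum_filter]
        congr 1; funext i; congr 1; ring
      rw [this]
      apply Finset.sum_le_sum
      intro i _
      by_cases h : y ≤ b i
      · have : x ≤ b i := le_trans hxy h
        simp [h, this]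
      · simp only [h, if_false]
        by_cases h' : x ≤ b i
        · simp only [h', if_true]
          exact Real.rpow_nonneg (by linarith) p
        · simp [h']
    have hkey := stmt18_key s hs (fun i => b i - y)
      (fun i hi => sub_nonneg.mpr (hys i hi)) (y - x) (by linarith) p hp
    have hmono : (∑ i ∈ s, ((b i - y) + (y - x)) ^ p) ^ (1 / p)
        ≤ (∑ i, if x ≤ b i then (b i - x) ^ p else 0) ^ (1 / p) := by
      apply Real.rpow_le_rpow _ hstep1 (by positivity)
      exact Finset.sum_nonneg fun i hi =>
        Real.rpow_nonneg (by linarith [hys i hi]) p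
    rw [hfy]
    linarith
  refine ⟨part1, ?_⟩
  intro α γ β ε κ κ' lam lam' hα hγ0 hγ1 hβ hε hκ hlam hlam' hf hf'
  have hgb : γ * β * (κ - κ') ≤ γ * β * ε ∧ γ * β * (κ' - κ) ≤ γ * β * ε := by
    have h1 := abs_le.mp hκ
    constructor
    · apply mul_le_mul_of_nonneg_left (by linarith [h1.2]) (by positivity)
    · apply mul_le_mul_of_nonneg_left (by linarith [h1.1]) (by positivity)
  rcases le_total lam lam' with h | h
  · have := part1 lam lam' hlam hlam' h
    rw [hf, hf'] at this
    rw [abs_le]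
    constructor
    · nlinarith [hgb.1, hgb.2]
    · nlinarith [hgb.1, hgb.2]
  · have := part1 lam' lam hlam' hlam h
    rw [hf, hf'] at this
    rw [abs_le]
    constructor
    · nlinarith [hgb.1, hgb.2]
    · nlinarith [hgb.1, hgb.2]
end

section
/- Let S be a finite nonempty set, v ∈ ℝ^S, and r > 0 real. Define h : ℝ → ℝ by h(λ) := ∑_{s∈S} sign(v(s) − λ) · |v(s) − λ|^r, where sign(t) = 1 for t > 0, 0 for t = 0, and −1 for t < 0. Then h is continuous and strictly decreasing, h(min_{s} v(s)) ≥ 0 and h(max_{s} v(s)) ≤ 0; consequently there exists a unique λ ∈ [min_{s} v(s), max_{s} v(s)] with h(λ) = 0. -/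
private lemma g_eq (r : ℝ) (hr : 0 < r) (t : ℝ) :
    Real.sign t * |t| ^ r = (max t 0) ^ r - (max (-t) 0) ^ r := by
  rcases lt_trichotomy t 0 with h | h | h
  · rw [Real.sign_of_neg h, abs_of_neg h, max_eq_right h.le,
      max_eq_left (by linarith), Real.zero_rpow hr.ne']
    ring
  · simp [h, Real.zero_rpow hr.ne']
  · rw [Real.sign_of_pos h, abs_of_pos h, max_eq_left h.le,
      max_eq_right (by linarith), Real.zero_rpow hr.ne']
    ring

private lemma g_cont (r : ℝ) (hr : 0 < r) :
    Continuous (fun t : ℝ => (max t 0) ^ r - (max (-t) 0) ^ r) := by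
  have h1 : ∀ t : ℝ, ContinuousAt (fun x : ℝ => x ^ r) t := fun t =>
    Real.continuousAt_rpow_const t r (Or.inr hr.le)
  have c1 : Continuous (fun t : ℝ => (max t 0) ^ r) :=
    (continuous_iff_continuousAt.2 fun t => (h1 _).comp
      ((continuous_id.max continuous_const).continuousAt))
  have c2 : Continuous (fun t : ℝ => (max (-t) 0) ^ r) :=
    (continuous_iff_continuousAt.2 fun t => (h1 _).comp
      ((continuous_neg.max continuous_const).continuousAt))
  exact c1.sub c2

private lemma g_mono (r : ℝ) (hr : 0 < r) :
    StrictMono (fun t : ℝ => (max t 0) ^ r - (max (-t) 0) ^ r) := by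
  intro a b hab
  have p_mono : (max a 0) ^ r ≤ (max b 0) ^ r :=
    Real.rpow_le_rpow (le_max_right a 0) (max_le_max hab.le le_rfl) hr.le
  have q_mono : (max (-b) 0) ^ r ≤ (max (-a) 0) ^ r :=
    Real.rpow_le_rpow (le_max_right (-b) 0) (max_le_max (by linarith) le_rfl) hr.le
  rcases lt_or_ge 0 b with hb | hb
  · have : (max a 0) ^ r < (max b 0) ^ r := by
      apply Real.rpow_lt_rpow (le_max_right a 0) _ hr
      rw [max_eq_left hb.le]
      exact max_lt hab hb
    simp only
    linarith
  · have ha : a < 0 := lt_of_lt_of_le hab hb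
    have : (max (-b) 0) ^ r < (max (-a) 0) ^ r := by
      apply Real.rpow_lt_rpow (le_max_right (-b) 0) _ hr
      rw [max_eq_left (by linarith : (0:ℝ) ≤ -a)]
      exact max_lt (by linarith) (by linarith)
    simp only
    linarith

/-- For a finite nonempty set `S`, `v : S → ℝ` and real `r > 0`, the
function `h(λ) = ∑_s sign(v s - λ) |v s - λ|^r` is continuous and strictly
decreasing, `h(min v) ≥ 0`, `h(max v) ≤ 0`, and there is a unique
`λ ∈ [min v, max v]` with `h(λ) = 0`. -/
theorem stmt19 (S : Type*) [Fintype S] [Nonempty S] (v : S → ℝ)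
    (r : ℝ) (hr : 0 < r) :
    Continuous (fun lam : ℝ => ∑ s, Real.sign (v s - lam) * |v s - lam| ^ r) ∧
    StrictAnti (fun lam : ℝ => ∑ s, Real.sign (v s - lam) * |v s - lam| ^ r) ∧
    0 ≤ (∑ s, Real.sign (v s - Finset.univ.inf' Finset.univ_nonempty v) *
        |v s - Finset.univ.inf' Finset.univ_nonempty v| ^ r) ∧
    (∑ s, Real.sign (v s - Finset.univ.sup' Finset.univ_nonempty v) *
        |v s - Finset.univ.sup' Finset.univ_nonempty v| ^ r) ≤ 0 ∧
    ∃! lam : ℝ,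
      lam ∈ Set.Icc (Finset.univ.inf' Finset.univ_nonempty v)
        (Finset.univ.sup' Finset.univ_nonempty v) ∧
      (∑ s, Real.sign (v s - lam) * |v s - lam| ^ r) = 0 := by
  set g : ℝ → ℝ := fun t => (max t 0) ^ r - (max (-t) 0) ^ r with hg
  have hrep : ∀ lam : ℝ,
      (∑ s, Real.sign (v s - lam) * |v s - lam| ^ r) = ∑ s, g (v s - lam) := by
    intro lam
    exact Finset.sum_congr rfl fun s _ => g_eq r hr _
  set h : ℝ → ℝ := fun lam => ∑ s, Real.sign (v s - lam) * |v s - lam| ^ r with hh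
  have hcont : Continuous h := by
    have : h = fun lam => ∑ s, g (v s - lam) := funext hrep
    rw [this]
    exact continuous_finset_sum _ fun s _ =>
      (g_cont r hr).comp (continuous_const.sub continuous_id)
  have hanti : StrictAnti h := by
    intro a b hab
    rw [hh]
    simp only
    rw [hrep a, hrep b]
    exact Finset.sum_lt_sum_of_nonempty Finset.univ_nonempty fun s _ =>
      g_mono r hr (by linarith : v s - b < v s - a)
  have g_nonneg : ∀ t : ℝ, 0 ≤ t → 0 ≤ g t := by
    intro t ht
    rw [hg]
    simp only
    rw [max_eq_right (by linarith : -t ≤ 0), Real.zero_rpow hr.ne']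
    have : (0:ℝ) ≤ (max t 0) ^ r := Real.rpow_nonneg (le_max_right t 0) r
    linarith
  have g_nonpos : ∀ t : ℝ, t ≤ 0 → g t ≤ 0 := by
    intro t ht
    rw [hg]
    simp only
    rw [max_eq_right ht, Real.zero_rpow hr.ne']
    have : (0:ℝ) ≤ (max (-t) 0) ^ r := Real.rpow_nonneg (le_max_right (-t) 0) r
    linarith
  set m := Finset.univ.inf' Finset.univ_nonempty v with hm
  set M := Finset.univ.sup' Finset.univ_nonempty v with hM
  have hmin : 0 ≤ h m := by
    rw [hh]
    simp only
    rw [hrep m]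
    exact Finset.sum_nonneg fun s _ => g_nonneg _
      (by have := Finset.inf'_le v (Finset.mem_univ s); linarith)
  have hmax : h M ≤ 0 := by
    rw [hh]
    simp only
    rw [hrep M]
    exact Finset.sum_nonpos fun s _ => g_nonpos _
      (by have := Finset.le_sup' v (Finset.mem_univ s); linarith)
  have hmM : m ≤ M := by
    obtain ⟨s⟩ := ‹Nonempty S›
    have h1 := Finset.inf'_le v (Finset.mem_univ s)
    have h2 := Finset.le_sup' v (Finset.mem_univ s)
    linarith
  refine ⟨hcont, hanti, hmin, hmax, ?_⟩
  have : (0:ℝ) ∈ Set.Icc (h M) (h m) := ⟨hmax, hmin⟩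
  obtain ⟨lam, hlam, hlam0⟩ :=
    intermediate_value_Icc' hmM hcont.continuousOn this
  exact ⟨lam, ⟨hlam, hlam0⟩, fun y hy =>
    hanti.injective (hy.2.trans hlam0.symm)⟩
end
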